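/- arXiv:2603.16383 — 4 statements merged into one kernel-verified Lean document; each statement's English description precedes it below -/
import Mathlib

section
/- Under assumptions (A) and (A+), fix (s, x) ∈ [0,T) × X and let z_t(η) denote the unique solution of the variational integral equation z_t = S_{t−s} η + ∫_s^t S_{t−τ}( Df_τ(y_τ) z_τ + DG_τ(y_τ)[z_τ] ū(τ) ) dτ, where y_τ := Φ̄_{s,τ}(x). Then there exists a constant M_4 ≥ 0, independent of η, such that for all η in a sufficiently small ball around the origin of X, sup_{t∈[s,T]} ‖ Φ̄_{s,t}(x + η) − Φ̄_{s,t}(x) − z_t(η) ‖_X ≤ M_4 ‖η‖_X² (a second-order remainder estimate). -/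
open MeasureTheory Set Filter Topology
open scoped RealInnerProductSpace

noncomputable section

/-- `φ` is a mild solution on `[s,T]` with initial data `(s, x)` for the semigroup `S`. -/
def IsMildSol {X : Type*} [NormedAddCommGroup X] [NormedSpace ℝ X]
    (T : ℝ) (S : ℝ → X →L[ℝ] X) (F : ℝ → X → X) (s : ℝ) (x : X) (φ : ℝ → X) : Prop :=
  ContinuousOn φ (Set.Icc s T) ∧
    ∀ t ∈ Set.Icc s T, φ t = S (t - s) x + ∫ τ in s..t, S (t - τ) (F τ (φ τ))

/-- Carathéodory-type measurability of compositions. -/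
lemma aesm_comp_lipschitz {X Y : Type*} [NormedAddCommGroup X] [NormedSpace ℝ X]
    [NormedAddCommGroup Y] [NormedSpace ℝ Y]
    {μ : Measure ℝ} {f : ℝ → X → Y} {C : ℝ}
    (hf : ∀ x : X, AEStronglyMeasurable (fun t => f t x) μ)
    (hLip : ∀ᵐ t ∂μ, ∀ a b : X, ‖f t a - f t b‖ ≤ C * ‖a - b‖)
    {g : ℝ → X} (hg : AEStronglyMeasurable g μ) :
    AEStronglyMeasurable (fun t => f t (g t)) μ := by
  obtain ⟨G, hGsm, hGg⟩ := hg
  have hsimple : ∀ h : SimpleFunc ℝ X, AEStronglyMeasurable (fun t => f t (h t)) μ := by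
    intro h
    have key : (fun t => f t (h t)) =
        fun t => ∑ c ∈ h.range, Set.indicator (h ⁻¹' {c}) (fun t => f t c) t := by
      funext t
      rw [Finset.sum_eq_single_of_mem (h t) (h.mem_range_self t)]
      · rw [Set.indicator_of_mem (by simp : t ∈ h ⁻¹' {h t})]
      · intro c _ hc
        exact Set.indicator_of_notMem (by simpa using fun hh => hc hh.symm) _
    rw [key]
    exact Finset.aestronglyMeasurable_fun_sum _ fun c _ =>
      (hf c).indicator (h.measurableSet_fiber c)
  refine aestronglyMeasurable_of_tendsto_ae atTop (fun n => hsimple (hGsm.approx n)) ?_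
  filter_upwards [hLip, hGg] with t ht htg
  rw [tendsto_iff_norm_sub_tendsto_zero]
  have h1 : Tendsto (fun n => C * ‖hGsm.approx n t - G t‖) atTop (𝓝 (C * 0)) :=
    tendsto_const_nhds.mul (tendsto_iff_norm_sub_tendsto_zero.1 (hGsm.tendsto_approx t))
  rw [mul_zero] at h1
  refine squeeze_zero (fun n => norm_nonneg _) (fun n => ?_) h1
  calc ‖f t (hGsm.approx n t) - f t (g t)‖
      = ‖f t (hGsm.approx n t) - f t (G t)‖ := by rw [htg]
    _ ≤ C * ‖hGsm.approx n t - G t‖ := ht _ _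

/-- Quadratic Taylor remainder from Lipschitz derivative. -/
lemma taylor_quadratic {X Y : Type*} [NormedAddCommGroup X] [NormedSpace ℝ X]
    [NormedAddCommGroup Y] [NormedSpace ℝ Y] {φ : X → Y} {M : ℝ} (hM : 0 ≤ M)
    (hφ : ContDiff ℝ 1 φ)
    (hLip : ∀ a b : X, ‖fderiv ℝ φ a - fderiv ℝ φ b‖ ≤ M * ‖a - b‖) (a b : X) :
    ‖φ a - φ b - fderiv ℝ φ b (a - b)‖ ≤ M * ‖a - b‖ ^ 2 := by
  have hseg : Convex ℝ (segment ℝ b a) := convex_segment _ _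
  have hder : ∀ y ∈ segment ℝ b a, HasFDerivWithinAt φ (fderiv ℝ φ y) (segment ℝ b a) y :=
    fun y _ => (hφ.differentiable one_ne_zero y).hasFDerivAt.hasFDerivWithinAt
  have hbound : ∀ y ∈ segment ℝ b a,
      ‖fderiv ℝ φ y - fderiv ℝ φ b‖ ≤ M * ‖a - b‖ := by
    intro y hy
    obtain ⟨u, v, hu, hv, huv, rfl⟩ := hy
    refine (hLip _ _).trans (mul_le_mul_of_nonneg_left ?_ hM)
    have h2 : u • b + v • a - b = v • (a - b) := by
      have : u = 1 - v := by linarith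
      rw [this]; module
    rw [h2, norm_smul, Real.norm_eq_abs, abs_of_nonneg hv]
    nlinarith [norm_nonneg (a - b)]
  have := hseg.norm_image_sub_le_of_norm_hasFDerivWithin_le' hder hbound
    (left_mem_segment ℝ b a) (right_mem_segment ℝ b a)
  calc ‖φ a - φ b - fderiv ℝ φ b (a - b)‖ ≤ M * ‖a - b‖ * ‖a - b‖ := this
    _ = M * ‖a - b‖ ^ 2 := by ring

/-- Integral form of Grönwall's inequality via iteration. -/
lemma gronwall_int {g : ℝ → ℝ} {s T a L B : ℝ} (hsT : s ≤ T) (ha : 0 ≤ a) (hL : 0 ≤ L)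
    (hg : ContinuousOn g (Set.Icc s T)) (hg0 : ∀ t ∈ Set.Icc s T, 0 ≤ g t)
    (hB : ∀ t ∈ Set.Icc s T, g t ≤ B)
    (hineq : ∀ t ∈ Set.Icc s T, g t ≤ a + L * ∫ τ in s..t, g τ) :
    ∀ t ∈ Set.Icc s T, g t ≤ a * Real.exp (L * (T - s)) := by
  have hB0 : 0 ≤ B := le_trans (hg0 s ⟨le_rfl, hsT⟩) (hB s ⟨le_rfl, hsT⟩)
  have hmom : ∀ (t : ℝ) (k : ℕ),
      (∫ τ in s..t, (τ - s) ^ k) = (t - s) ^ (k + 1) / (k + 1) := by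
    intro t k
    rw [intervalIntegral.integral_comp_sub_right (fun u => u ^ k) s]
    rw [integral_pow]
    simp
  have key : ∀ n : ℕ, ∀ t ∈ Set.Icc s T,
      g t ≤ a * (∑ k ∈ Finset.range n, (L * (t - s)) ^ k / (Nat.factorial k)) +
        B * ((L * (t - s)) ^ n / (Nat.factorial n)) := by
    intro n
    induction n with
    | zero => intro t ht; simpa using hB t ht
    | succ n IH =>
      intro t ht
      have hst : s ≤ t := ht.1
      have htT : t ≤ T := ht.2
      set P : ℝ → ℝ := fun τ =>
        (∑ k ∈ Finset.range n, (a * L ^ k / (Nat.factorial k)) * (τ - s) ^ k) +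
          (B * L ^ n / (Nat.factorial n)) * (τ - s) ^ n with hP
      have hPcont : Continuous P := by
        apply Continuous.add
        · exact continuous_finset_sum _ fun k _ =>
            continuous_const.mul ((continuous_id.sub continuous_const).pow k)
        · exact continuous_const.mul ((continuous_id.sub continuous_const).pow n)
      have hPint : IntervalIntegrable P volume s t := hPcont.intervalIntegrable s t
      have hgint : IntervalIntegrable g volume s t := by
        apply ContinuousOn.intervalIntegrable
        rw [Set.uIcc_of_le hst]
        exact hg.mono (Set.Icc_subset_Icc le_rfl htT)
      have hgP : ∀ τ ∈ Set.Icc s t, g τ ≤ P τ := by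
        intro τ hτ
        refine (IH τ ⟨hτ.1, hτ.2.trans htT⟩).trans (le_of_eq ?_)
        rw [hP]
        simp only [Finset.mul_sum]
        congr 1
        · exact Finset.sum_congr rfl fun k _ => by rw [mul_pow]; ring
        · rw [mul_pow]; ring
      have hPval : (∫ τ in s..t, P τ) =
          (∑ k ∈ Finset.range n,
            (a * L ^ k / (Nat.factorial k)) * ((t - s) ^ (k + 1) / (k + 1))) +
          (B * L ^ n / (Nat.factorial n)) * ((t - s) ^ (n + 1) / (n + 1)) := by
        have hik : ∀ (c : ℝ) (k : ℕ),
            IntervalIntegrable (fun τ : ℝ => c * (τ - s) ^ k) volume s t := fun c k =>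
          (continuous_const.mul ((continuous_id.sub continuous_const).pow k)).intervalIntegrable s t
        have hsum : IntervalIntegrable
            (fun τ : ℝ => ∑ k ∈ Finset.range n, a * L ^ k / (Nat.factorial k) * (τ - s) ^ k)
            volume s t := by
          apply Continuous.intervalIntegrable
          exact continuous_finset_sum _ fun k _ =>
            continuous_const.mul ((continuous_id.sub continuous_const).pow k)
        simp only [hP]
        rw [intervalIntegral.integral_add hsum (hik _ n)]
        rw [intervalIntegral.integral_finset_sum
          (fun k _ => hik (a * L ^ k / (Nat.factorial k)) k)]
        congr 1
        · exact Finset.sum_congr rfl fun k _ => by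
            rw [intervalIntegral.integral_const_mul, hmom]
        · rw [intervalIntegral.integral_const_mul, hmom]
      have step : g t ≤ a + L * ∫ τ in s..t, P τ := by
        refine (hineq t ht).trans ?_
        have : (∫ τ in s..t, g τ) ≤ ∫ τ in s..t, P τ :=
          intervalIntegral.integral_mono_on hst hgint hPint hgP
        nlinarith
      refine step.trans (le_of_eq ?_)
      rw [hPval]
      have hterm : ∀ (c : ℝ) (k : ℕ),
          L * ((c * L ^ k / (Nat.factorial k)) * ((t - s) ^ (k + 1) / (k + 1))) =
            c * ((L * (t - s)) ^ (k + 1) / (Nat.factorial (k + 1))) := by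
        intro c k
        have hk : ((Nat.factorial k : ℝ)) ≠ 0 := Nat.cast_ne_zero.2 (Nat.factorial_ne_zero k)
        have hk1 : ((k : ℝ) + 1) ≠ 0 := by positivity
        rw [Nat.factorial_succ, mul_pow]
        push_cast
        field_simp
        ring
      conv_rhs => rw [Finset.mul_sum, Finset.sum_range_succ'
        (fun k => a * ((L * (t - s)) ^ k / (Nat.factorial k))) n]
      conv_lhs => rw [mul_add, Finset.mul_sum]
      simp only [hterm]
      simp only [pow_zero, Nat.factorial_zero, Nat.cast_one, div_one, mul_one]
      ring
  intro t ht
  have hx0 : 0 ≤ L * (t - s) := mul_nonneg hL (sub_nonneg.2 ht.1)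
  have h1 : ∀ n : ℕ, g t ≤ a * Real.exp (L * (T - s)) +
      B * ((L * (t - s)) ^ n / (Nat.factorial n)) := by
    intro n
    refine (key n t ht).trans ?_
    gcongr
    refine (Real.sum_le_exp_of_nonneg hx0 n).trans (Real.exp_le_exp.2 ?_)
    have := ht.2
    nlinarith
  have h2 : Tendsto (fun n : ℕ => a * Real.exp (L * (T - s)) +
      B * ((L * (t - s)) ^ n / (Nat.factorial n))) atTop
      (𝓝 (a * Real.exp (L * (T - s)) + B * 0)) :=
    tendsto_const_nhds.add
      (tendsto_const_nhds.mul (FloorSemiring.tendsto_pow_div_factorial_atTop (L * (t - s))))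
  have := ge_of_tendsto' h2 h1
  simpa using this


set_option maxHeartbeats 2000000

/-- second-order remainder estimate for the mild flow: the solution `z(η)`
of the variational equation approximates `Φ̄_{s,·}(x+η) − Φ̄_{s,·}(x)` up to `O(‖η‖²)`,
uniformly in `t ∈ [s,T]`, for all `η` in a small ball. -/
theorem mild_flow_second_order_remainder
    {X : Type*} [NormedAddCommGroup X] [NormedSpace ℝ X] [CompleteSpace X]
    {m : ℕ} {T : ℝ} (hT : 0 < T)
    (S : ℝ → X →L[ℝ] X)
    (hS0 : S 0 = ContinuousLinearMap.id ℝ X)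
    (hSadd : ∀ a b : ℝ, 0 ≤ a → 0 ≤ b → S (a + b) = (S a).comp (S b))
    (hScont : ∀ x : X, ContinuousOn (fun σ => S σ x) (Set.Ici (0 : ℝ)))
    (U : Set (EuclideanSpace ℝ (Fin m))) (hUcpt : IsCompact U) (hUcvx : Convex ℝ U)
    (f : ℝ → X → X) (G : ℝ → X → EuclideanSpace ℝ (Fin m) →L[ℝ] X)
    {Mf MG : ℝ} (hMf : 0 ≤ Mf) (hMG : 0 ≤ MG)
    (hfmeas : ∀ x : X,
      AEStronglyMeasurable (fun t => f t x) (volume.restrict (Set.Icc (0:ℝ) T)))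
    (hGmeas : ∀ x : X,
      AEStronglyMeasurable (fun t => G t x) (volume.restrict (Set.Icc (0:ℝ) T)))
    (hA : ∀ᵐ t ∂(volume.restrict (Set.Icc (0:ℝ) T)),
        (∀ x y : X, ‖f t x - f t y‖ ≤ Mf * ‖x - y‖) ∧
        (∀ x y : X, ‖G t x - G t y‖ ≤ MG * ‖x - y‖) ∧
        ‖f t 0‖ ≤ Mf ∧ ‖G t 0‖ ≤ MG)
    {M : ℝ} (hM : 0 ≤ M)
    (hDfmeas : ∀ x : X,
      AEStronglyMeasurable (fun t => fderiv ℝ (f t) x) (volume.restrict (Set.Icc (0:ℝ) T)))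
    (hDGmeas : ∀ x : X,
      AEStronglyMeasurable (fun t => fderiv ℝ (G t) x) (volume.restrict (Set.Icc (0:ℝ) T)))
    (hAplus : ∀ᵐ t ∂(volume.restrict (Set.Icc (0:ℝ) T)),
        ContDiff ℝ 1 (f t) ∧ ContDiff ℝ 1 (G t) ∧
        (∀ x : X, ‖fderiv ℝ (f t) x‖ ≤ M) ∧
        (∀ x : X, ‖fderiv ℝ (G t) x‖ ≤ M) ∧
        (∀ x y : X, ‖fderiv ℝ (f t) x - fderiv ℝ (f t) y‖ ≤ M * ‖x - y‖) ∧
        (∀ x y : X, ‖fderiv ℝ (G t) x - fderiv ℝ (G t) y‖ ≤ M * ‖x - y‖))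
    (ubar : ℝ → EuclideanSpace ℝ (Fin m))
    (hubar_meas : AEStronglyMeasurable ubar (volume.restrict (Set.Icc (0:ℝ) T)))
    (hubar_mem : ∀ᵐ t ∂(volume.restrict (Set.Icc (0:ℝ) T)), ubar t ∈ U)
    (Φ : ℝ → ℝ → X → X)
    (hΦ : ∀ s ∈ Set.Icc (0:ℝ) T, ∀ x : X,
      IsMildSol T S (fun τ y => f τ y + G τ y (ubar τ)) s x (fun t => Φ s t x))
    (s : ℝ) (hs : s ∈ Set.Ico (0:ℝ) T) (x : X) :
    ∃ M₄ : ℝ, 0 ≤ M₄ ∧ ∃ δ : ℝ, 0 < δ ∧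
      ∀ η : X, ‖η‖ ≤ δ →
        ∀ z : ℝ → X, ContinuousOn z (Set.Icc s T) →
          (∀ t ∈ Set.Icc s T,
            z t = S (t - s) η +
              ∫ τ in s..t, S (t - τ)
                (fderiv ℝ (f τ) (Φ s τ x) (z τ) +
                  (fderiv ℝ (G τ) (Φ s τ x) (z τ)) (ubar τ))) →
          ∀ t ∈ Set.Icc s T,
            ‖Φ s t (x + η) - Φ s t x - z t‖ ≤ M₄ * ‖η‖ ^ 2 := by
  obtain ⟨hs0, hsT'⟩ := hs
  have hsT : s ≤ T := hsT'.le
  have hTs : (0:ℝ) ≤ T - s := sub_nonneg.2 hsT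
  have hsIcc : s ∈ Set.Icc (0:ℝ) T := ⟨hs0, hsT⟩
  -- uniform bound for the semigroup on [0,T]
  obtain ⟨CS, hCS0, hCS⟩ : ∃ C : ℝ, 0 ≤ C ∧ ∀ σ ∈ Set.Icc (0:ℝ) T, ‖S σ‖ ≤ C := by
    obtain ⟨C, hC⟩ := banach_steinhaus (g := fun σ : Set.Icc (0:ℝ) T => S σ) (fun v => by
      obtain ⟨C, hC⟩ := (isCompact_Icc : IsCompact (Set.Icc (0:ℝ) T)).exists_bound_of_continuousOn
        ((hScont v).mono (fun σ hσ => hσ.1))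
      exact ⟨C, fun σ => hC σ σ.2⟩)
    exact ⟨max C 0, le_max_right _ _, fun σ hσ => le_trans (hC ⟨σ, hσ⟩) (le_max_left _ _)⟩
  -- bound for the control set
  obtain ⟨CU, hCU0, hCU⟩ : ∃ C : ℝ, 0 ≤ C ∧ ∀ u ∈ U, ‖u‖ ≤ C := by
    obtain ⟨r, hr⟩ := hUcpt.isBounded.subset_closedBall 0
    exact ⟨max r 0, le_max_right _ _, fun u hu =>
      le_trans (by simpa [dist_zero_right] using hr hu) (le_max_left _ _)⟩
  set L1 : ℝ := Mf + MG * CU with hL1def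
  have hL1nn : 0 ≤ L1 := by positivity
  set C₁ : ℝ := CS * Real.exp (CS * L1 * (T - s)) with hC₁def
  have hC₁nn : 0 ≤ C₁ := by positivity
  refine ⟨CS * (M * (1 + CU)) * C₁ ^ 2 * (T - s) * Real.exp (CS * (M * (1 + CU)) * (T - s)),
    by positivity, 1, one_pos, ?_⟩
  intro η hη z hzc hzeq
  obtain ⟨hYc', hYeq'⟩ := hΦ s hsIcc (x + η)
  obtain ⟨hyc', hyeq'⟩ := hΦ s hsIcc x
  have hYc : ContinuousOn (fun t => Φ s t (x + η)) (Set.Icc s T) := hYc'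
  have hyc : ContinuousOn (fun t => Φ s t x) (Set.Icc s T) := hyc'
  have hYeq : ∀ t ∈ Set.Icc s T, Φ s t (x + η) = S (t - s) (x + η) +
      ∫ τ in s..t, S (t - τ) (f τ (Φ s τ (x + η)) + G τ (Φ s τ (x + η)) (ubar τ)) := hYeq'
  have hyeq : ∀ t ∈ Set.Icc s T, Φ s t x = S (t - s) x +
      ∫ τ in s..t, S (t - τ) (f τ (Φ s τ x) + G τ (Φ s τ x) (ubar τ)) := hyeq'
  clear hYeq' hyeq' hYc' hyc'
  -- transferring a.e. facts to [s,T]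
  have hsub0 : Set.Icc s T ⊆ Set.Icc (0:ℝ) T := Set.Icc_subset_Icc hs0 le_rfl
  have hle0 : volume.restrict (Set.Icc s T) ≤ volume.restrict (Set.Icc (0:ℝ) T) :=
    Measure.restrict_mono hsub0 le_rfl
  have hA' := ae_restrict_of_ae_restrict_of_subset hsub0 hA
  have hAplus' := ae_restrict_of_ae_restrict_of_subset hsub0 hAplus
  have hu' : ∀ᵐ τ ∂(volume.restrict (Set.Icc s T)), ‖ubar τ‖ ≤ CU := by
    filter_upwards [ae_restrict_of_ae_restrict_of_subset hsub0 hubar_mem] with τ hτ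
    exact hCU _ hτ
  -- measurability of compositions
  have hYm : AEStronglyMeasurable (fun τ => Φ s τ (x + η)) (volume.restrict (Set.Icc s T)) :=
    hYc.aestronglyMeasurable measurableSet_Icc
  have hym : AEStronglyMeasurable (fun τ => Φ s τ x) (volume.restrict (Set.Icc s T)) :=
    hyc.aestronglyMeasurable measurableSet_Icc
  have hzm : AEStronglyMeasurable z (volume.restrict (Set.Icc s T)) :=
    hzc.aestronglyMeasurable measurableSet_Icc
  have hum : AEStronglyMeasurable ubar (volume.restrict (Set.Icc s T)) :=
    hubar_meas.mono_measure hle0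
  have hfLip : ∀ᵐ τ ∂(volume.restrict (Set.Icc s T)), ∀ a b : X,
      ‖f τ a - f τ b‖ ≤ Mf * ‖a - b‖ := by filter_upwards [hA'] with τ h using h.1
  have hGLip : ∀ᵐ τ ∂(volume.restrict (Set.Icc s T)), ∀ a b : X,
      ‖G τ a - G τ b‖ ≤ MG * ‖a - b‖ := by filter_upwards [hA'] with τ h using h.2.1
  have hDfLip : ∀ᵐ τ ∂(volume.restrict (Set.Icc s T)), ∀ a b : X,
      ‖fderiv ℝ (f τ) a - fderiv ℝ (f τ) b‖ ≤ M * ‖a - b‖ := by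
    filter_upwards [hAplus'] with τ h using h.2.2.2.2.1
  have hDGLip : ∀ᵐ τ ∂(volume.restrict (Set.Icc s T)), ∀ a b : X,
      ‖fderiv ℝ (G τ) a - fderiv ℝ (G τ) b‖ ≤ M * ‖a - b‖ := by
    filter_upwards [hAplus'] with τ h using h.2.2.2.2.2
  have hfY : AEStronglyMeasurable (fun τ => f τ (Φ s τ (x + η)))
      (volume.restrict (Set.Icc s T)) :=
    aesm_comp_lipschitz (fun v => (hfmeas v).mono_measure hle0) hfLip hYm
  have hfy : AEStronglyMeasurable (fun τ => f τ (Φ s τ x)) (volume.restrict (Set.Icc s T)) :=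
    aesm_comp_lipschitz (fun v => (hfmeas v).mono_measure hle0) hfLip hym
  have hGY : AEStronglyMeasurable (fun τ => G τ (Φ s τ (x + η)))
      (volume.restrict (Set.Icc s T)) :=
    aesm_comp_lipschitz (fun v => (hGmeas v).mono_measure hle0) hGLip hYm
  have hGy : AEStronglyMeasurable (fun τ => G τ (Φ s τ x)) (volume.restrict (Set.Icc s T)) :=
    aesm_comp_lipschitz (fun v => (hGmeas v).mono_measure hle0) hGLip hym
  have hGYu : AEStronglyMeasurable (fun τ => G τ (Φ s τ (x + η)) (ubar τ))
      (volume.restrict (Set.Icc s T)) :=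
    isBoundedBilinearMap_apply.continuous.comp_aestronglyMeasurable (hGY.prodMk hum)
  have hGyu : AEStronglyMeasurable (fun τ => G τ (Φ s τ x) (ubar τ))
      (volume.restrict (Set.Icc s T)) :=
    isBoundedBilinearMap_apply.continuous.comp_aestronglyMeasurable (hGy.prodMk hum)
  have hFY : AEStronglyMeasurable
      (fun τ => f τ (Φ s τ (x + η)) + G τ (Φ s τ (x + η)) (ubar τ))
      (volume.restrict (Set.Icc s T)) := hfY.add hGYu
  have hFy : AEStronglyMeasurable (fun τ => f τ (Φ s τ x) + G τ (Φ s τ x) (ubar τ))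
      (volume.restrict (Set.Icc s T)) := hfy.add hGyu
  have hDfy : AEStronglyMeasurable (fun τ => fderiv ℝ (f τ) (Φ s τ x))
      (volume.restrict (Set.Icc s T)) :=
    aesm_comp_lipschitz (fun v => (hDfmeas v).mono_measure hle0) hDfLip hym
  have hDGy : AEStronglyMeasurable (fun τ => fderiv ℝ (G τ) (Φ s τ x))
      (volume.restrict (Set.Icc s T)) :=
    aesm_comp_lipschitz (f := fun τ v => fderiv ℝ (G τ) v) (fun v => (hDGmeas v).mono_measure hle0) hDGLip hym
  have hDfyz : AEStronglyMeasurable (fun τ => fderiv ℝ (f τ) (Φ s τ x) (z τ))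
      (volume.restrict (Set.Icc s T)) :=
    isBoundedBilinearMap_apply.continuous.comp_aestronglyMeasurable (hDfy.prodMk hzm)
  have hDGyz : AEStronglyMeasurable (fun τ => fderiv ℝ (G τ) (Φ s τ x) (z τ))
      (volume.restrict (Set.Icc s T)) :=
    isBoundedBilinearMap_apply.continuous.comp_aestronglyMeasurable (hDGy.prodMk hzm)
  have hDGyzu : AEStronglyMeasurable (fun τ => (fderiv ℝ (G τ) (Φ s τ x) (z τ)) (ubar τ))
      (volume.restrict (Set.Icc s T)) :=
    isBoundedBilinearMap_apply.continuous.comp_aestronglyMeasurable (hDGyz.prodMk hum)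
  have hLinm : AEStronglyMeasurable
      (fun τ => fderiv ℝ (f τ) (Φ s τ x) (z τ) + (fderiv ℝ (G τ) (Φ s τ x) (z τ)) (ubar τ))
      (volume.restrict (Set.Icc s T)) := hDfyz.add hDGyzu
  -- sup bounds
  obtain ⟨RY, hRY⟩ := (isCompact_Icc : IsCompact (Set.Icc s T)).exists_bound_of_continuousOn hYc
  obtain ⟨Ry, hRy⟩ := (isCompact_Icc : IsCompact (Set.Icc s T)).exists_bound_of_continuousOn hyc
  obtain ⟨Rz, hRz⟩ := (isCompact_Icc : IsCompact (Set.Icc s T)).exists_bound_of_continuousOn hzc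
  have hRz0 : 0 ≤ Rz := (norm_nonneg _).trans (hRz s ⟨le_rfl, hsT⟩)
  -- a.e. norm bounds
  have hnormb : ∀ (R : ℝ) (v : ℝ → X), (∀ t ∈ Set.Icc s T, ‖v t‖ ≤ R) →
      ∀ᵐ τ ∂(volume.restrict (Set.Icc s T)),
        ‖f τ (v τ) + G τ (v τ) (ubar τ)‖ ≤ Mf * R + Mf + (MG * R + MG) * CU := by
    intro R v hv
    filter_upwards [hA', hu', ae_restrict_mem measurableSet_Icc] with τ h hub hmem
    have hvR : ‖v τ‖ ≤ R := hv τ hmem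
    have hR0 : 0 ≤ R := (norm_nonneg _).trans hvR
    have h1 : ‖f τ (v τ)‖ ≤ Mf * R + Mf := by
      have e : f τ (v τ) = (f τ (v τ) - f τ 0) + f τ 0 := by abel
      rw [e]
      refine (norm_add_le _ _).trans ?_
      have := h.1 (v τ) 0
      rw [sub_zero] at this
      have h2 := h.2.2.1
      nlinarith [norm_nonneg (v τ)]
    have h2 : ‖G τ (v τ)‖ ≤ MG * R + MG := by
      have e : G τ (v τ) = (G τ (v τ) - G τ 0) + G τ 0 := by abel
      rw [e]
      refine (norm_add_le _ _).trans ?_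
      have := h.2.1 (v τ) 0
      rw [sub_zero] at this
      have h3 := h.2.2.2
      nlinarith [norm_nonneg (v τ)]
    refine (norm_add_le _ _).trans ?_
    have h4 : ‖G τ (v τ) (ubar τ)‖ ≤ (MG * R + MG) * CU := by
      refine (ContinuousLinearMap.le_opNorm _ _).trans ?_
      exact mul_le_mul h2 hub (norm_nonneg _) (by positivity)
    linarith
  have hFYbd := hnormb RY _ hRY
  have hFybd := hnormb Ry _ hRy
  have hLinbd : ∀ᵐ τ ∂(volume.restrict (Set.Icc s T)),
      ‖fderiv ℝ (f τ) (Φ s τ x) (z τ) + (fderiv ℝ (G τ) (Φ s τ x) (z τ)) (ubar τ)‖ ≤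
        M * Rz + M * Rz * CU := by
    filter_upwards [hAplus', hu', ae_restrict_mem measurableSet_Icc] with τ h hub hmem
    have hz1 : ‖z τ‖ ≤ Rz := hRz τ hmem
    have h1 : ‖fderiv ℝ (f τ) (Φ s τ x) (z τ)‖ ≤ M * Rz := by
      refine (ContinuousLinearMap.le_opNorm _ _).trans ?_
      exact mul_le_mul (h.2.2.1 _) hz1 (norm_nonneg _) hM
    have h2 : ‖(fderiv ℝ (G τ) (Φ s τ x) (z τ)) (ubar τ)‖ ≤ M * Rz * CU := by
      refine (ContinuousLinearMap.le_opNorm _ _).trans ?_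
      have h3 : ‖fderiv ℝ (G τ) (Φ s τ x) (z τ)‖ ≤ M * Rz := by
        refine (ContinuousLinearMap.le_opNorm _ _).trans ?_
        exact mul_le_mul (h.2.2.2.1 _) hz1 (norm_nonneg _) hM
      exact mul_le_mul h3 hub (norm_nonneg _) (by positivity)
    exact (norm_add_le _ _).trans (by linarith)
  -- interval integrability of semigroup compositions
  have intS : ∀ c : ℝ, ∀ t ∈ Set.Icc s T, ∀ v : ℝ → X,
      AEStronglyMeasurable v (volume.restrict (Set.Icc s T)) →
      (∀ᵐ τ ∂(volume.restrict (Set.Icc s T)), ‖v τ‖ ≤ c) →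
      IntervalIntegrable (fun τ => S (t - τ) (v τ)) volume s t := by
    intro c t ht v hv hvb
    have hst := ht.1
    rw [intervalIntegrable_iff_integrableOn_Ioc_of_le hst]
    have hsub : Set.Ioc s t ⊆ Set.Icc s T := fun τ hτ => ⟨hτ.1.le, hτ.2.trans ht.2⟩
    have hle : volume.restrict (Set.Ioc s t) ≤ volume.restrict (Set.Icc s T) :=
      Measure.restrict_mono hsub le_rfl
    have hmemS : ∀ τ ∈ Set.Ioc s t, t - τ ∈ Set.Icc (0:ℝ) T := by
      intro τ hτ
      constructor
      · linarith [hτ.2]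
      · have h1 := hτ.1
        have h2 := ht.2
        linarith
    have hSLip : ∀ᵐ τ ∂(volume.restrict (Set.Ioc s t)), ∀ a b : X,
        ‖S (t - τ) a - S (t - τ) b‖ ≤ CS * ‖a - b‖ := by
      filter_upwards [ae_restrict_mem measurableSet_Ioc] with τ hτ a b
      rw [← map_sub]
      exact (ContinuousLinearMap.le_opNorm _ _).trans
        (mul_le_mul_of_nonneg_right (hCS _ (hmemS τ hτ)) (norm_nonneg _))
    have hSc : ∀ xv : X,
        AEStronglyMeasurable (fun τ => S (t - τ) xv) (volume.restrict (Set.Ioc s t)) := by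
      intro xv
      have hc : ContinuousOn (fun τ => S (t - τ) xv) (Set.Icc s t) := by
        refine (hScont xv).comp (continuous_const.sub continuous_id).continuousOn ?_
        intro τ hτ
        exact sub_nonneg.2 hτ.2
      exact (hc.mono Set.Ioc_subset_Icc_self).aestronglyMeasurable measurableSet_Ioc
    have hcomp : AEStronglyMeasurable (fun τ => S (t - τ) (v τ))
        (volume.restrict (Set.Ioc s t)) :=
      aesm_comp_lipschitz hSc hSLip (hv.mono_measure hle)
    refine Integrable.mono' (g := fun _ => CS * c)
      (integrableOn_const measure_Ioc_lt_top.ne) hcomp ?_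
    filter_upwards [ae_restrict_of_ae_restrict_of_subset hsub hvb,
      ae_restrict_mem measurableSet_Ioc] with τ h1 h2
    exact (ContinuousLinearMap.le_opNorm _ _).trans
      (mul_le_mul (hCS _ (hmemS τ h2)) h1 (norm_nonneg _) hCS0)
  have hI1 : ∀ t ∈ Set.Icc s T, IntervalIntegrable
      (fun τ => S (t - τ) (f τ (Φ s τ (x + η)) + G τ (Φ s τ (x + η)) (ubar τ))) volume s t :=
    fun t ht => intS _ t ht _ hFY hFYbd
  have hI2 : ∀ t ∈ Set.Icc s T, IntervalIntegrable
      (fun τ => S (t - τ) (f τ (Φ s τ x) + G τ (Φ s τ x) (ubar τ))) volume s t :=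
    fun t ht => intS _ t ht _ hFy hFybd
  have hI3 : ∀ t ∈ Set.Icc s T, IntervalIntegrable
      (fun τ => S (t - τ) (fderiv ℝ (f τ) (Φ s τ x) (z τ) +
        (fderiv ℝ (G τ) (Φ s τ x) (z τ)) (ubar τ))) volume s t :=
    fun t ht => intS _ t ht _ hLinm hLinbd
  -- difference of flows as a single integral
  have hdiff : ∀ t ∈ Set.Icc s T, Φ s t (x + η) - Φ s t x = S (t - s) η +
      ∫ τ in s..t, S (t - τ) ((f τ (Φ s τ (x + η)) + G τ (Φ s τ (x + η)) (ubar τ)) -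
        (f τ (Φ s τ x) + G τ (Φ s τ x) (ubar τ))) := by
    intro t ht
    have e1 := hYeq t ht
    rw [map_add] at e1
    calc Φ s t (x + η) - Φ s t x
        = S (t - s) η +
          ((∫ τ in s..t, S (t - τ) (f τ (Φ s τ (x + η)) + G τ (Φ s τ (x + η)) (ubar τ))) -
            ∫ τ in s..t, S (t - τ) (f τ (Φ s τ x) + G τ (Φ s τ x) (ubar τ))) := by
          rw [e1, hyeq t ht]; abel
      _ = S (t - s) η + ∫ τ in s..t,
            (S (t - τ) (f τ (Φ s τ (x + η)) + G τ (Φ s τ (x + η)) (ubar τ)) -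
             S (t - τ) (f τ (Φ s τ x) + G τ (Φ s τ x) (ubar τ))) := by
          rw [intervalIntegral.integral_sub (hI1 t ht) (hI2 t ht)]
      _ = _ := by simp only [map_sub]
  have hSle : ∀ t ∈ Set.Icc s T, ‖S (t - s) η‖ ≤ CS * ‖η‖ := by
    intro t ht
    refine (ContinuousLinearMap.le_opNorm _ _).trans
      (mul_le_mul_of_nonneg_right (hCS _ ⟨by linarith [ht.1], by linarith [ht.2, hs0]⟩)
        (norm_nonneg _))
  -- Step 1: Lipschitz estimate for the flow difference
  have hd1 : ∀ t ∈ Set.Icc s T, ‖Φ s t (x + η) - Φ s t x‖ ≤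
      CS * ‖η‖ + (CS * L1) * ∫ τ in s..t, ‖Φ s τ (x + η) - Φ s τ x‖ := by
    intro t ht
    rw [hdiff t ht]
    refine (norm_add_le _ _).trans (add_le_add (hSle t ht) ?_)
    have hgb : IntervalIntegrable (fun τ => CS * L1 * ‖Φ s τ (x + η) - Φ s τ x‖) volume s t := by
      apply ContinuousOn.intervalIntegrable
      rw [Set.uIcc_of_le ht.1]
      exact continuousOn_const.mul (((hYc.mono (Set.Icc_subset_Icc le_rfl ht.2)).sub
        (hyc.mono (Set.Icc_subset_Icc le_rfl ht.2))).norm)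
    have hsub : Set.Ioc s t ⊆ Set.Icc s T := fun τ hτ => ⟨hτ.1.le, hτ.2.trans ht.2⟩
    have hptw : ∀ᵐ τ ∂(volume.restrict (Set.uIoc s t)),
        ‖S (t - τ) ((f τ (Φ s τ (x + η)) + G τ (Φ s τ (x + η)) (ubar τ)) -
          (f τ (Φ s τ x) + G τ (Φ s τ x) (ubar τ)))‖ ≤
          CS * L1 * ‖Φ s τ (x + η) - Φ s τ x‖ := by
      rw [Set.uIoc_of_le ht.1]
      filter_upwards [ae_restrict_of_ae_restrict_of_subset hsub hA',
        ae_restrict_of_ae_restrict_of_subset hsub hu',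
        ae_restrict_mem measurableSet_Ioc] with τ hτA hτu hτm
      have hSop : ‖S (t - τ)‖ ≤ CS := hCS _ ⟨by linarith [hτm.2], by linarith [hτm.1, ht.2, hs0]⟩
      set D := Φ s τ (x + η) - Φ s τ x with hD
      have hre : (f τ (Φ s τ (x + η)) + G τ (Φ s τ (x + η)) (ubar τ)) -
          (f τ (Φ s τ x) + G τ (Φ s τ x) (ubar τ)) =
          (f τ (Φ s τ (x + η)) - f τ (Φ s τ x)) +
          ((G τ (Φ s τ (x + η)) - G τ (Φ s τ x)) (ubar τ)) := by
        simp only [ContinuousLinearMap.sub_apply]; abel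
      have hinner : ‖(f τ (Φ s τ (x + η)) + G τ (Φ s τ (x + η)) (ubar τ)) -
          (f τ (Φ s τ x) + G τ (Φ s τ x) (ubar τ))‖ ≤ L1 * ‖D‖ := by
        rw [hre]
        refine (norm_add_le _ _).trans ?_
        have h1 := hτA.1 (Φ s τ (x + η)) (Φ s τ x)
        have h2 : ‖(G τ (Φ s τ (x + η)) - G τ (Φ s τ x)) (ubar τ)‖ ≤ MG * ‖D‖ * CU := by
          refine (ContinuousLinearMap.le_opNorm _ _).trans ?_
          exact mul_le_mul (hτA.2.1 _ _) hτu (norm_nonneg _) (by positivity)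
        rw [hL1def]
        nlinarith [norm_nonneg D]
      refine (ContinuousLinearMap.le_opNorm _ _).trans ?_
      calc ‖S (t - τ)‖ * ‖(f τ (Φ s τ (x + η)) + G τ (Φ s τ (x + η)) (ubar τ)) -
              (f τ (Φ s τ x) + G τ (Φ s τ x) (ubar τ))‖
          ≤ CS * (L1 * ‖D‖) := by
            exact mul_le_mul hSop hinner (norm_nonneg _) hCS0
        _ = CS * L1 * ‖D‖ := by ring
    refine (intervalIntegral.norm_integral_le_abs_of_norm_le hptw hgb).trans ?_
    rw [abs_of_nonneg (intervalIntegral.integral_nonneg ht.1 (fun τ _ => by positivity))]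
    rw [intervalIntegral.integral_const_mul]
  have hgron1 : ∀ t ∈ Set.Icc s T, ‖Φ s t (x + η) - Φ s t x‖ ≤
      (CS * ‖η‖) * Real.exp ((CS * L1) * (T - s)) := by
    obtain ⟨Bd, hBd⟩ := (isCompact_Icc : IsCompact (Set.Icc s T)).exists_bound_of_continuousOn
      ((hYc.sub hyc).norm)
    refine gronwall_int (B := Bd) hsT (by positivity) (by positivity) ((hYc.sub hyc).norm)
      (fun t _ => norm_nonneg _) (fun t ht => ?_) hd1
    exact (le_abs_self _).trans (le_of_eq_of_le (Real.norm_eq_abs _).symm (hBd t ht))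
  have hstep1 : ∀ t ∈ Set.Icc s T, ‖Φ s t (x + η) - Φ s t x‖ ≤ C₁ * ‖η‖ := by
    intro t ht
    refine (hgron1 t ht).trans_eq ?_
    rw [hC₁def]; ring
  -- Step 2: remainder integral equation
  have hwdiff : ∀ t ∈ Set.Icc s T, Φ s t (x + η) - Φ s t x - z t =
      ∫ τ in s..t, S (t - τ)
        (((f τ (Φ s τ (x + η)) + G τ (Φ s τ (x + η)) (ubar τ)) -
          (f τ (Φ s τ x) + G τ (Φ s τ x) (ubar τ))) -
         (fderiv ℝ (f τ) (Φ s τ x) (z τ) + (fderiv ℝ (G τ) (Φ s τ x) (z τ)) (ubar τ))) := by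
    intro t ht
    have hIcomb : IntervalIntegrable (fun τ => S (t - τ)
        ((f τ (Φ s τ (x + η)) + G τ (Φ s τ (x + η)) (ubar τ)) -
         (f τ (Φ s τ x) + G τ (Φ s τ x) (ubar τ)))) volume s t := by
      have := (hI1 t ht).sub (hI2 t ht)
      simpa only [map_sub] using this
    rw [hdiff t ht, hzeq t ht]
    calc S (t - s) η + (∫ τ in s..t, S (t - τ)
          ((f τ (Φ s τ (x + η)) + G τ (Φ s τ (x + η)) (ubar τ)) -
           (f τ (Φ s τ x) + G τ (Φ s τ x) (ubar τ)))) -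
        (S (t - s) η + ∫ τ in s..t, S (t - τ)
          (fderiv ℝ (f τ) (Φ s τ x) (z τ) + (fderiv ℝ (G τ) (Φ s τ x) (z τ)) (ubar τ)))
        = (∫ τ in s..t, S (t - τ)
            ((f τ (Φ s τ (x + η)) + G τ (Φ s τ (x + η)) (ubar τ)) -
             (f τ (Φ s τ x) + G τ (Φ s τ x) (ubar τ)))) -
          ∫ τ in s..t, S (t - τ)
            (fderiv ℝ (f τ) (Φ s τ x) (z τ) + (fderiv ℝ (G τ) (Φ s τ x) (z τ)) (ubar τ)) := by
          abel
      _ = _ := by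
          rw [← intervalIntegral.integral_sub hIcomb (hI3 t ht)]
          simp only [map_sub]
  -- Step 2: quadratic estimate for the remainder
  have hd2 : ∀ t ∈ Set.Icc s T, ‖Φ s t (x + η) - Φ s t x - z t‖ ≤
      CS * (M * (1 + CU)) * (C₁ * ‖η‖) ^ 2 * (T - s) +
      (CS * (M * (1 + CU))) * ∫ τ in s..t, ‖Φ s τ (x + η) - Φ s τ x - z τ‖ := by
    intro t ht
    rw [hwdiff t ht]
    have hwcont : ContinuousOn (fun τ => ‖Φ s τ (x + η) - Φ s τ x - z τ‖) (Set.Icc s T) :=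
      ((hYc.sub hyc).sub hzc).norm
    have hgb : IntervalIntegrable
        (fun τ => CS * (M * (1 + CU)) * ((C₁ * ‖η‖) ^ 2 + ‖Φ s τ (x + η) - Φ s τ x - z τ‖))
        volume s t := by
      apply ContinuousOn.intervalIntegrable
      rw [Set.uIcc_of_le ht.1]
      exact continuousOn_const.mul (continuousOn_const.add
        (hwcont.mono (Set.Icc_subset_Icc le_rfl ht.2)))
    have hsub : Set.Ioc s t ⊆ Set.Icc s T := fun τ hτ => ⟨hτ.1.le, hτ.2.trans ht.2⟩
    have hptw : ∀ᵐ τ ∂(volume.restrict (Set.uIoc s t)),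
        ‖S (t - τ) (((f τ (Φ s τ (x + η)) + G τ (Φ s τ (x + η)) (ubar τ)) -
            (f τ (Φ s τ x) + G τ (Φ s τ x) (ubar τ))) -
          (fderiv ℝ (f τ) (Φ s τ x) (z τ) + (fderiv ℝ (G τ) (Φ s τ x) (z τ)) (ubar τ)))‖ ≤
        CS * (M * (1 + CU)) * ((C₁ * ‖η‖) ^ 2 + ‖Φ s τ (x + η) - Φ s τ x - z τ‖) := by
      rw [Set.uIoc_of_le ht.1]
      filter_upwards [ae_restrict_of_ae_restrict_of_subset hsub hAplus',
        ae_restrict_of_ae_restrict_of_subset hsub hu',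
        ae_restrict_mem measurableSet_Ioc] with τ hτA hτu hτm
      have hτIcc : τ ∈ Set.Icc s T := hsub hτm
      have hSop : ‖S (t - τ)‖ ≤ CS := hCS _ ⟨by linarith [hτm.2], by linarith [hτm.1, ht.2, hs0]⟩
      set Yv := Φ s τ (x + η) with hYv
      set yv := Φ s τ x with hyv
      set D := Yv - yv with hDdef
      set w := Yv - yv - z τ with hwdef
      have hDle : ‖D‖ ≤ C₁ * ‖η‖ := hstep1 τ hτIcc
      have hDsq : ‖D‖ ^ 2 ≤ (C₁ * ‖η‖) ^ 2 := by
        have := norm_nonneg D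
        nlinarith
      have hid : ((f τ Yv + G τ Yv (ubar τ)) - (f τ yv + G τ yv (ubar τ))) -
          (fderiv ℝ (f τ) yv (z τ) + (fderiv ℝ (G τ) yv (z τ)) (ubar τ)) =
          (f τ Yv - f τ yv - fderiv ℝ (f τ) yv D) +
          ((G τ Yv - G τ yv - fderiv ℝ (G τ) yv D) (ubar τ)) +
          fderiv ℝ (f τ) yv w + (fderiv ℝ (G τ) yv w) (ubar τ) := by
        rw [hwdef, hDdef]
        simp only [map_sub, ContinuousLinearMap.sub_apply]
        abel
      have hA1 : ‖f τ Yv - f τ yv - fderiv ℝ (f τ) yv D‖ ≤ M * ‖D‖ ^ 2 := by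
        rw [hDdef]
        exact taylor_quadratic hM hτA.1 hτA.2.2.2.2.1 Yv yv
      have hA2 : ‖(G τ Yv - G τ yv - fderiv ℝ (G τ) yv D) (ubar τ)‖ ≤ M * ‖D‖ ^ 2 * CU := by
        refine (ContinuousLinearMap.le_opNorm _ _).trans ?_
        have h1 : ‖G τ Yv - G τ yv - fderiv ℝ (G τ) yv D‖ ≤ M * ‖D‖ ^ 2 := by
          rw [hDdef]
          exact taylor_quadratic hM hτA.2.1 hτA.2.2.2.2.2 Yv yv
        exact mul_le_mul h1 hτu (norm_nonneg _) (by positivity)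
      have hA3 : ‖fderiv ℝ (f τ) yv w‖ ≤ M * ‖w‖ := by
        refine (ContinuousLinearMap.le_opNorm _ _).trans ?_
        exact mul_le_mul_of_nonneg_right (hτA.2.2.1 _) (norm_nonneg _)
      have hA4 : ‖(fderiv ℝ (G τ) yv w) (ubar τ)‖ ≤ M * ‖w‖ * CU := by
        refine (ContinuousLinearMap.le_opNorm _ _).trans ?_
        have h1 : ‖fderiv ℝ (G τ) yv w‖ ≤ M * ‖w‖ := by
          refine (ContinuousLinearMap.le_opNorm _ _).trans ?_
          exact mul_le_mul_of_nonneg_right (hτA.2.2.2.1 _) (norm_nonneg _)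
        exact mul_le_mul h1 hτu (norm_nonneg _) (by positivity)
      have hinner : ‖((f τ Yv + G τ Yv (ubar τ)) - (f τ yv + G τ yv (ubar τ))) -
          (fderiv ℝ (f τ) yv (z τ) + (fderiv ℝ (G τ) yv (z τ)) (ubar τ))‖ ≤
          M * (1 + CU) * ((C₁ * ‖η‖) ^ 2 + ‖w‖) := by
        rw [hid]
        have htri : ‖(f τ Yv - f τ yv - fderiv ℝ (f τ) yv D) +
            ((G τ Yv - G τ yv - fderiv ℝ (G τ) yv D) (ubar τ)) +
            fderiv ℝ (f τ) yv w + (fderiv ℝ (G τ) yv w) (ubar τ)‖ ≤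
            ‖f τ Yv - f τ yv - fderiv ℝ (f τ) yv D‖ +
            ‖(G τ Yv - G τ yv - fderiv ℝ (G τ) yv D) (ubar τ)‖ +
            ‖fderiv ℝ (f τ) yv w‖ + ‖(fderiv ℝ (G τ) yv w) (ubar τ)‖ := by
          refine (norm_add_le _ _).trans (add_le_add_left ((norm_add_le _ _).trans
            (add_le_add_left (norm_add_le _ _) _)) _)
        have k1 : M * ‖D‖ ^ 2 ≤ M * (C₁ * ‖η‖) ^ 2 := mul_le_mul_of_nonneg_left hDsq hM
        have k2 : M * ‖D‖ ^ 2 * CU ≤ M * (C₁ * ‖η‖) ^ 2 * CU := mul_le_mul_of_nonneg_right k1 hCU0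
        nlinarith [norm_nonneg w, htri, hA1, hA2, hA3, hA4, k1, k2]
      refine (ContinuousLinearMap.le_opNorm _ _).trans ?_
      calc ‖S (t - τ)‖ * ‖((f τ Yv + G τ Yv (ubar τ)) - (f τ yv + G τ yv (ubar τ))) -
              (fderiv ℝ (f τ) yv (z τ) + (fderiv ℝ (G τ) yv (z τ)) (ubar τ))‖
          ≤ CS * (M * (1 + CU) * ((C₁ * ‖η‖) ^ 2 + ‖w‖)) :=
            mul_le_mul hSop hinner (norm_nonneg _) hCS0
        _ = CS * (M * (1 + CU)) * ((C₁ * ‖η‖) ^ 2 + ‖w‖) := by ring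
    refine (intervalIntegral.norm_integral_le_abs_of_norm_le hptw hgb).trans ?_
    rw [abs_of_nonneg (intervalIntegral.integral_nonneg ht.1 (fun τ _ => by positivity))]
    rw [intervalIntegral.integral_const_mul]
    have hwint : IntervalIntegrable (fun τ => ‖Φ s τ (x + η) - Φ s τ x - z τ‖) volume s t := by
      apply ContinuousOn.intervalIntegrable
      rw [Set.uIcc_of_le ht.1]
      exact hwcont.mono (Set.Icc_subset_Icc le_rfl ht.2)
    rw [intervalIntegral.integral_add (intervalIntegrable_const) hwint]
    rw [intervalIntegral.integral_const]
    have h1 : (t - s) • (C₁ * ‖η‖) ^ 2 ≤ (C₁ * ‖η‖) ^ 2 * (T - s) := by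
      rw [smul_eq_mul]
      have h2 : t - s ≤ T - s := by linarith [ht.2]
      have h3 : (0:ℝ) ≤ (C₁ * ‖η‖) ^ 2 := by positivity
      nlinarith
    have hc0 : (0:ℝ) ≤ CS * (M * (1 + CU)) := by positivity
    nlinarith
  -- Grönwall for the remainder
  obtain ⟨Bw, hBw⟩ := (isCompact_Icc : IsCompact (Set.Icc s T)).exists_bound_of_continuousOn
    (((hYc.sub hyc).sub hzc).norm)
  have hgron2 := gronwall_int (B := Bw) hsT
    (a := CS * (M * (1 + CU)) * (C₁ * ‖η‖) ^ 2 * (T - s)) (by positivity)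
    (L := CS * (M * (1 + CU))) (by positivity)
    (((hYc.sub hyc).sub hzc).norm) (fun t _ => norm_nonneg _)
    (fun t ht => (le_abs_self _).trans (le_of_eq_of_le (Real.norm_eq_abs _).symm (hBw t ht)))
    hd2
  intro t ht
  refine (hgron2 t ht).trans_eq ?_
  ring
end
end

section
/- Assume (A), (A+), ℓ ∈ C¹(X) and ℓ Lipschitz on bounded subsets of X. Fix ū, u ∈ 𝒰 and x₀ ∈ X, let x_t := x^u_t denote the trajectory driven by u from x₀, and set g(t) := p̄_t(x_t) where p̄_t := ℓ ∘ Φ̄_{t,T}. Then g is Lipschitz continuous on I; in particular, g is absolutely continuous on I. -/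
open MeasureTheory Set Filter
open scoped RealInnerProductSpace

noncomputable section

/-- Integral form of Grönwall's inequality. -/
private lemma gronwall_int_s11 {g : ℝ → ℝ} {s b A K : ℝ} (hA : 0 ≤ A) (hK : 0 ≤ K)
    (hg : ContinuousOn g (Set.Icc s b))
    (hpos : ∀ t ∈ Set.Icc s b, 0 ≤ g t)
    (hle : ∀ t ∈ Set.Icc s b, g t ≤ A + K * ∫ τ in s..t, g τ) :
    ∀ t ∈ Set.Icc s b, g t ≤ A * Real.exp (K * (b - s)) := by
  intro t ht
  have hsb : s ≤ b := le_trans ht.1 ht.2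
  set h : ℝ → ℝ := fun t => A + K * ∫ τ in s..t, g τ with hhdef
  have hmemIcc : ∀ x ∈ Set.Ico s b, Set.Icc s b ∈ nhdsWithin x (Set.Ioi x) := by
    intro x hx
    have h1 : Set.Ioi x ∩ Set.Iio b ∈ nhdsWithin x (Set.Ioi x) :=
      inter_mem_nhdsWithin _ (Iio_mem_nhds hx.2)
    exact Filter.mem_of_superset h1 (fun τ hτ => ⟨le_trans hx.1 hτ.1.le, hτ.2.le⟩)
  have hgint : IntegrableOn g (Set.Icc s b) volume :=
    hg.integrableOn_compact isCompact_Icc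
  have hcont : ContinuousOn h (Set.Icc s b) := by
    apply continuousOn_const.add (continuousOn_const.mul ?_)
    have := intervalIntegral.continuousOn_primitive_interval
      (a := s) (b := b) (f := g) (μ := volume) (by rwa [Set.uIcc_of_le hsb])
    rwa [Set.uIcc_of_le hsb] at this
  have hDer : ∀ x ∈ Set.Ico s b, HasDerivWithinAt h (K * g x) (Set.Ici x) x := by
    intro x hx
    have hint : IntervalIntegrable g volume s x :=
      (hg.mono (Set.Icc_subset_Icc le_rfl hx.2.le)).intervalIntegrable_of_Icc hx.1
    have hmeas : StronglyMeasurableAtFilter g (nhdsWithin x (Set.Ioi x)) :=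
      ⟨Set.Icc s b, hmemIcc x hx, hg.aestronglyMeasurable measurableSet_Icc⟩
    have hcw : ContinuousWithinAt g (Set.Ioi x) x :=
      (hg x ⟨hx.1, hx.2.le⟩).mono_of_mem_nhdsWithin (hmemIcc x hx)
    have H : HasDerivWithinAt (fun u => ∫ τ in s..u, g τ) (g x) (Set.Ici x) x :=
      intervalIntegral.integral_hasDerivWithinAt_right hint hmeas hcw
    exact (H.const_mul K).const_add A
  have hbound : ∀ x ∈ Set.Ico s b, ‖K * g x‖ ≤ K * ‖h x‖ + 0 := by
    intro x hx
    have hgx : 0 ≤ g x := hpos x ⟨hx.1, hx.2.le⟩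
    have hgh : g x ≤ h x := hle x ⟨hx.1, hx.2.le⟩
    have hh0 : 0 ≤ h x := le_trans hgx hgh
    rw [Real.norm_eq_abs, Real.norm_eq_abs, abs_of_nonneg (mul_nonneg hK hgx),
      abs_of_nonneg hh0, add_zero]
    exact mul_le_mul_of_nonneg_left hgh hK
  have hstart : ‖h s‖ ≤ A := by
    simp [hhdef, abs_of_nonneg hA]
  have key := norm_le_gronwallBound_of_norm_deriv_right_le hcont hDer hstart hbound t ht
  rw [gronwallBound_ε0] at key
  calc g t ≤ h t := hle t ht
    _ ≤ ‖h t‖ := le_abs_self _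
    _ ≤ A * Real.exp (K * (t - s)) := key
    _ ≤ A * Real.exp (K * (b - s)) := by
        apply mul_le_mul_of_nonneg_left (Real.exp_le_exp.2 ?_) hA
        have : t ≤ b := ht.2
        nlinarith


/-- Superposition of an a.e.-Lipschitz Carathéodory map with a continuous function
is a.e. strongly measurable. -/
private lemma aesm_comp_lip {X Y : Type*} [NormedAddCommGroup X] [NormedAddCommGroup Y]
    {T : ℝ} (hT : 0 ≤ T) {h : ℝ → X → Y} {K : ℝ}
    (hmeas : ∀ x : X, AEStronglyMeasurable (fun t => h t x) (volume.restrict (Set.Icc (0:ℝ) T)))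
    (hlip : ∀ᵐ t ∂(volume.restrict (Set.Icc (0:ℝ) T)), ∀ x y : X, ‖h t x - h t y‖ ≤ K * ‖x - y‖)
    {φ : ℝ → X} (hφ : Continuous φ) :
    AEStronglyMeasurable (fun t => h t (φ t)) (volume.restrict (Set.Icc (0:ℝ) T)) := by
  set k : ℕ → ℝ → ℤ := fun n τ => max 0 (min ⌊(n+1 : ℝ) * τ⌋ ⌈(n+1 : ℝ) * T⌉) with hkdef
  have hkmeas : ∀ n, Measurable (k n) := by
    intro n
    exact measurable_const.max ((Int.measurable_floor.comp
      (measurable_id.const_mul ((n:ℝ)+1))).min measurable_const)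
  have hgn : ∀ n, AEStronglyMeasurable (fun τ => h τ (φ ((k n τ : ℝ) / (n+1))))
      (volume.restrict (Set.Icc (0:ℝ) T)) := by
    intro n
    have hNn : (0:ℤ) ≤ ⌈(n+1 : ℝ) * T⌉ := Int.ceil_nonneg (by positivity)
    have hrep : (fun τ => h τ (φ ((k n τ : ℝ) / (n+1)))) = fun τ =>
        ∑ j ∈ Finset.Icc (0 : ℤ) ⌈(n+1 : ℝ) * T⌉,
          Set.indicator (k n ⁻¹' {j}) (fun τ' => h τ' (φ ((j : ℝ) / (n+1)))) τ := by
      funext τ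
      have hmem : k n τ ∈ Finset.Icc (0 : ℤ) ⌈(n+1 : ℝ) * T⌉ := by
        rw [Finset.mem_Icc]
        exact ⟨le_max_left _ _, max_le hNn (min_le_right _ _)⟩
      rw [Finset.sum_eq_single_of_mem (k n τ) hmem]
      · rw [Set.indicator_of_mem (show τ ∈ k n ⁻¹' {k n τ} from rfl)]
      · intro j _ hne
        refine Set.indicator_of_notMem (fun hc => hne ?_) _
        have : k n τ = j := by simpa using hc
        exact this.symm
    rw [hrep]
    exact Finset.aestronglyMeasurable_fun_sum _ fun j _ =>
      (hmeas _).indicator ((hkmeas n) (measurableSet_singleton j))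
  have hconv : ∀ᵐ τ ∂(volume.restrict (Set.Icc (0:ℝ) T)),
      Filter.Tendsto (fun n => h τ (φ ((k n τ : ℝ) / (n+1)))) Filter.atTop
        (nhds (h τ (φ τ))) := by
    filter_upwards [hlip, ae_restrict_mem measurableSet_Icc] with τ hlipτ hτI
    have hkn : ∀ n : ℕ, k n τ = ⌊(n+1 : ℝ) * τ⌋ := by
      intro n
      have hpos : (0:ℝ) ≤ (n:ℝ)+1 := by positivity
      have h1 : (0:ℤ) ≤ ⌊(n+1:ℝ) * τ⌋ := Int.floor_nonneg.2 (mul_nonneg hpos hτI.1)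
      have h2 : ⌊(n+1:ℝ) * τ⌋ ≤ ⌈(n+1:ℝ) * T⌉ :=
        le_trans (Int.floor_le_floor (mul_le_mul_of_nonneg_left hτI.2 hpos))
          (Int.floor_le_ceil _)
      simp only [hkdef]
      rw [min_eq_left h2, max_eq_right h1]
    have hr : Filter.Tendsto (fun n : ℕ => ((k n τ : ℝ))/(n+1)) Filter.atTop (nhds τ) := by
      simp only [hkn]
      apply tendsto_of_tendsto_of_tendsto_of_le_of_le
        (g := fun n : ℕ => τ - 1/((n:ℝ)+1)) (h := fun _ => τ)
      · simpa using (tendsto_const_nhds : Tendsto (fun _ : ℕ => τ) atTop (nhds τ)).sub tendsto_one_div_add_atTop_nhds_zero_nat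
      · exact tendsto_const_nhds
      · intro n
        have hn : (0:ℝ) < (n:ℝ)+1 := by positivity
        rw [le_div_iff₀ hn]
        have hfl := Int.sub_one_lt_floor (((n:ℝ)+1) * τ)
        have : (τ - 1/((n:ℝ)+1)) * ((n:ℝ)+1) = ((n:ℝ)+1) * τ - 1 := by
          field_simp
        rw [this]
        linarith
      · intro n
        have hn : (0:ℝ) < (n:ℝ)+1 := by positivity
        rw [div_le_iff₀ hn]
        have := Int.floor_le (((n:ℝ)+1) * τ)
        linarith [this]
    have hφr : Filter.Tendsto (fun n : ℕ => φ ((k n τ : ℝ)/(n+1))) Filter.atTop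
        (nhds (φ τ)) := (hφ.continuousAt.tendsto).comp hr
    have hnrm : Filter.Tendsto (fun n : ℕ => K * ‖φ ((k n τ : ℝ)/(n+1)) - φ τ‖)
        Filter.atTop (nhds 0) := by
      have := tendsto_iff_norm_sub_tendsto_zero.1 hφr
      simpa using this.const_mul K
    rw [tendsto_iff_norm_sub_tendsto_zero]
    exact squeeze_zero (fun n => norm_nonneg _) (fun n => hlipτ _ _) hnrm
  exact aestronglyMeasurable_of_tendsto_ae Filter.atTop hgn hconv


set_option maxHeartbeats 2000000 in
/-- with (A), (A+), `ℓ ∈ C¹(X)` Lipschitz on bounded sets, the function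
`g(t) = p̄_t(x^u_t) = ℓ(Φ̄_{t,T}(x^u_t))` is Lipschitz on `I = [0,T]`; in particular it
is absolutely continuous on `I`. -/
theorem backward_cost_along_trajectory_lipschitz
    {X : Type*} [NormedAddCommGroup X] [NormedSpace ℝ X] [CompleteSpace X]
    {m : ℕ} {T : ℝ} (hT : 0 < T)
    (S : ℝ → X →L[ℝ] X)
    (hS0 : S 0 = ContinuousLinearMap.id ℝ X)
    (hSadd : ∀ a b : ℝ, 0 ≤ a → 0 ≤ b → S (a + b) = (S a).comp (S b))
    (hScont : ∀ x : X, ContinuousOn (fun σ => S σ x) (Set.Ici (0 : ℝ)))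
    (U : Set (EuclideanSpace ℝ (Fin m))) (hUcpt : IsCompact U) (hUcvx : Convex ℝ U)
    (f : ℝ → X → X) (G : ℝ → X → EuclideanSpace ℝ (Fin m) →L[ℝ] X)
    {Mf MG : ℝ} (hMf : 0 ≤ Mf) (hMG : 0 ≤ MG)
    (hfmeas : ∀ x : X,
      AEStronglyMeasurable (fun t => f t x) (volume.restrict (Set.Icc (0:ℝ) T)))
    (hGmeas : ∀ x : X,
      AEStronglyMeasurable (fun t => G t x) (volume.restrict (Set.Icc (0:ℝ) T)))
    (hA : ∀ᵐ t ∂(volume.restrict (Set.Icc (0:ℝ) T)),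
        (∀ x y : X, ‖f t x - f t y‖ ≤ Mf * ‖x - y‖) ∧
        (∀ x y : X, ‖G t x - G t y‖ ≤ MG * ‖x - y‖) ∧
        ‖f t 0‖ ≤ Mf ∧ ‖G t 0‖ ≤ MG)
    {M : ℝ} (hM : 0 ≤ M)
    (hDfmeas : ∀ x : X,
      AEStronglyMeasurable (fun t => fderiv ℝ (f t) x) (volume.restrict (Set.Icc (0:ℝ) T)))
    (hDGmeas : ∀ x : X,
      AEStronglyMeasurable (fun t => fderiv ℝ (G t) x) (volume.restrict (Set.Icc (0:ℝ) T)))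
    (hAplus : ∀ᵐ t ∂(volume.restrict (Set.Icc (0:ℝ) T)),
        ContDiff ℝ 1 (f t) ∧ ContDiff ℝ 1 (G t) ∧
        (∀ x : X, ‖fderiv ℝ (f t) x‖ ≤ M) ∧
        (∀ x : X, ‖fderiv ℝ (G t) x‖ ≤ M) ∧
        (∀ x y : X, ‖fderiv ℝ (f t) x - fderiv ℝ (f t) y‖ ≤ M * ‖x - y‖) ∧
        (∀ x y : X, ‖fderiv ℝ (G t) x - fderiv ℝ (G t) y‖ ≤ M * ‖x - y‖))
    (ubar : ℝ → EuclideanSpace ℝ (Fin m))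
    (hubar_meas : AEStronglyMeasurable ubar (volume.restrict (Set.Icc (0:ℝ) T)))
    (hubar_mem : ∀ᵐ t ∂(volume.restrict (Set.Icc (0:ℝ) T)), ubar t ∈ U)
    (Φ : ℝ → ℝ → X → X)
    (hΦ : ∀ s ∈ Set.Icc (0:ℝ) T, ∀ x : X,
      IsMildSol T S (fun τ y => f τ y + G τ y (ubar τ)) s x (fun t => Φ s t x))
    (ℓ : X → ℝ) (hℓ : ContDiff ℝ 1 ℓ)
    (hℓLip : ∀ B : Set X, Bornology.IsBounded B →
      ∃ K : ℝ, ∀ x ∈ B, ∀ y ∈ B, |ℓ x - ℓ y| ≤ K * ‖x - y‖)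
    (u : ℝ → EuclideanSpace ℝ (Fin m))
    (hu_meas : AEStronglyMeasurable u (volume.restrict (Set.Icc (0:ℝ) T)))
    (hu_mem : ∀ᵐ t ∂(volume.restrict (Set.Icc (0:ℝ) T)), u t ∈ U)
    (x₀ : X) (xu : ℝ → X)
    (hxu : IsMildSol T S (fun τ y => f τ y + G τ y (u τ)) 0 x₀ xu)
 :
    ∃ L : ℝ, 0 ≤ L ∧ ∀ a ∈ Set.Icc (0:ℝ) T, ∀ b ∈ Set.Icc (0:ℝ) T,
      |ℓ (Φ b T (xu b)) - ℓ (Φ a T (xu a))| ≤ L * |b - a| := by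
  classical
  have hT0 : (0:ℝ) ≤ T := hT.le
  haveI : IsFiniteMeasure (volume.restrict (Set.Icc (0:ℝ) T)) := by
    constructor
    rw [Measure.restrict_apply_univ, Real.volume_Icc]
    exact ENNReal.ofReal_lt_top
  -- uniform bound on the semigroup on `[0,T]`
  obtain ⟨C0, hC0⟩ := banach_steinhaus (ι := (Set.Icc (0:ℝ) T))
    (g := fun σ : Set.Icc (0:ℝ) T => S σ.1) (by
      intro x
      obtain ⟨Cx, hCx⟩ := isCompact_Icc.exists_bound_of_continuousOn
        ((hScont x).mono Set.Icc_subset_Ici_self)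
      exact ⟨Cx, fun σ => hCx σ.1 σ.2⟩)
  set C : ℝ := max C0 1 with hCdef
  have hC1 : (1:ℝ) ≤ C := le_max_right _ _
  have hCpos : (0:ℝ) < C := lt_of_lt_of_le one_pos hC1
  have hSop : ∀ σ ∈ Set.Icc (0:ℝ) T, ∀ z : X, ‖S σ z‖ ≤ C * ‖z‖ := by
    intro σ hσ z
    refine le_trans ((S σ).le_opNorm z) (mul_le_mul_of_nonneg_right ?_ (norm_nonneg z))
    exact le_trans (hC0 ⟨σ, hσ⟩) (le_max_left _ _)
  -- bound on the control set
  obtain ⟨RU0, hRU0⟩ := hUcpt.isBounded.exists_norm_le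
  set RU : ℝ := max RU0 0 with hRUdef
  have hRU : ∀ v ∈ U, ‖v‖ ≤ RU := fun v hv => le_trans (hRU0 v hv) (le_max_left _ _)
  have hRUpos : (0:ℝ) ≤ RU := le_max_right _ _
  set K : ℝ := Mf + MG * RU with hKdef
  have hK : 0 ≤ K := add_nonneg hMf (mul_nonneg hMG hRUpos)
  have hvnorm : ∀ {v : ℝ → EuclideanSpace ℝ (Fin m)},
      (∀ᵐ τ ∂(volume.restrict (Set.Icc (0:ℝ) T)), v τ ∈ U) →
      ∀ᵐ τ ∂(volume.restrict (Set.Icc (0:ℝ) T)), ‖v τ‖ ≤ RU :=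
    fun hv => hv.mono fun τ hτ => hRU _ hτ
  -- pointwise bounds coming from assumption (A)
  have hFbound : ∀ τ : ℝ, (∀ x y : X, ‖f τ x - f τ y‖ ≤ Mf * ‖x - y‖) →
      (∀ x y : X, ‖G τ x - G τ y‖ ≤ MG * ‖x - y‖) → ‖f τ 0‖ ≤ Mf → ‖G τ 0‖ ≤ MG →
      ∀ vτ : EuclideanSpace ℝ (Fin m), ‖vτ‖ ≤ RU →
      ∀ y : X, ‖f τ y + G τ y vτ‖ ≤ K * (1 + ‖y‖) := by
    intro τ hlf hlG hf0 hG0 vτ hvτ y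
    have h1 : ‖f τ y‖ ≤ Mf * (1 + ‖y‖) := by
      have := hlf y 0
      calc ‖f τ y‖ = ‖(f τ y - f τ 0) + f τ 0‖ := by rw [sub_add_cancel]
        _ ≤ ‖f τ y - f τ 0‖ + ‖f τ 0‖ := norm_add_le _ _
        _ ≤ Mf * ‖y - 0‖ + Mf := add_le_add (hlf y 0) hf0
        _ = Mf * (1 + ‖y‖) := by rw [sub_zero]; ring
    have h2 : ‖G τ y‖ ≤ MG * (1 + ‖y‖) := by
      calc ‖G τ y‖ = ‖(G τ y - G τ 0) + G τ 0‖ := by rw [sub_add_cancel]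
        _ ≤ ‖G τ y - G τ 0‖ + ‖G τ 0‖ := norm_add_le _ _
        _ ≤ MG * ‖y - 0‖ + MG := add_le_add (hlG y 0) hG0
        _ = MG * (1 + ‖y‖) := by rw [sub_zero]; ring
    have h3 : ‖G τ y vτ‖ ≤ MG * (1 + ‖y‖) * RU :=
      le_trans ((G τ y).le_opNorm vτ)
        (mul_le_mul h2 hvτ (norm_nonneg _) (by positivity))
    calc ‖f τ y + G τ y vτ‖ ≤ ‖f τ y‖ + ‖G τ y vτ‖ := norm_add_le _ _
      _ ≤ Mf * (1 + ‖y‖) + MG * (1 + ‖y‖) * RU := add_le_add h1 h3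
      _ = K * (1 + ‖y‖) := by rw [hKdef]; ring
  have hFdiff : ∀ τ : ℝ, (∀ x y : X, ‖f τ x - f τ y‖ ≤ Mf * ‖x - y‖) →
      (∀ x y : X, ‖G τ x - G τ y‖ ≤ MG * ‖x - y‖) →
      ∀ vτ : EuclideanSpace ℝ (Fin m), ‖vτ‖ ≤ RU →
      ∀ y z : X, ‖(f τ y + G τ y vτ) - (f τ z + G τ z vτ)‖ ≤ K * ‖y - z‖ := by
    intro τ hlf hlG vτ hvτ y z
    have hre : (f τ y + G τ y vτ) - (f τ z + G τ z vτ)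
        = (f τ y - f τ z) + (G τ y - G τ z) vτ := by
      rw [ContinuousLinearMap.sub_apply]; abel
    rw [hre]
    have h2 : ‖(G τ y - G τ z) vτ‖ ≤ MG * ‖y - z‖ * RU :=
      le_trans ((G τ y - G τ z).le_opNorm vτ)
        (mul_le_mul (hlG y z) hvτ (norm_nonneg _)
          (mul_nonneg hMG (norm_nonneg _)))
    calc ‖(f τ y - f τ z) + (G τ y - G τ z) vτ‖
        ≤ ‖f τ y - f τ z‖ + ‖(G τ y - G τ z) vτ‖ := norm_add_le _ _
      _ ≤ Mf * ‖y - z‖ + MG * ‖y - z‖ * RU := add_le_add (hlf y z) h2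
      _ = K * ‖y - z‖ := by rw [hKdef]; ring
  -- clamped semigroup and its joint continuity
  set c : ℝ → ℝ := fun σ => min (max σ 0) T with hcdef
  have hcmem : ∀ σ, c σ ∈ Set.Icc (0:ℝ) T :=
    fun σ => ⟨le_min (le_max_right σ 0) hT0, min_le_right _ _⟩
  have hceq : ∀ σ ∈ Set.Icc (0:ℝ) T, c σ = σ := by
    intro σ hσ
    simp only [hcdef]
    rw [max_eq_left hσ.1, min_eq_left hσ.2]
  have hccont : Continuous c := (continuous_id.max continuous_const).min continuous_const
  have hSc : Continuous (fun p : ℝ × X => S (c p.1) p.2) := by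
    rw [continuous_iff_continuousAt]
    rintro ⟨σ₀, y₀⟩
    have h1 : Continuous (fun σ : ℝ => S (c σ) y₀) :=
      (hScont y₀).comp_continuous hccont (fun σ => (hcmem σ).1)
    have h2 : Filter.Tendsto (fun p : ℝ × X => S (c p.1) y₀) (nhds (σ₀, y₀))
        (nhds (S (c σ₀) y₀)) := ((h1.comp continuous_fst).continuousAt (x := (σ₀, y₀)))
    have h3 : Filter.Tendsto (fun p : ℝ × X => S (c p.1) (p.2 - y₀)) (nhds (σ₀, y₀))
        (nhds 0) := by
      apply squeeze_zero_norm (a := fun p : ℝ × X => C * ‖p.2 - y₀‖)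
      · intro p; exact hSop _ (hcmem _) _
      · have h4 : Filter.Tendsto (fun p : ℝ × X => ‖p.2 - y₀‖) (nhds (σ₀, y₀))
            (nhds ‖y₀ - y₀‖) :=
          ((continuous_snd.sub continuous_const).norm).continuousAt
        simpa using h4.const_mul C
    have h5 := h3.add h2
    rw [zero_add] at h5
    have heq : (fun p : ℝ × X => S (c p.1) p.2)
        = fun p => S (c p.1) (p.2 - y₀) + S (c p.1) y₀ := by
      funext p
      rw [← map_add]
      congr 1
      abel
    rw [ContinuousAt, heq]
    exact h5
  -- measurability of the integrands
  have pkg : ∀ v : ℝ → EuclideanSpace ℝ (Fin m),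
      AEStronglyMeasurable v (volume.restrict (Set.Icc (0:ℝ) T)) →
      ∀ w : ℝ → X, Continuous w → ∀ t : ℝ,
      AEStronglyMeasurable (fun τ => S (c (t - τ)) (f τ (w τ) + G τ (w τ) (v τ)))
        (volume.restrict (Set.Icc (0:ℝ) T)) := by
    intro v hv w hw t
    have h1 : AEStronglyMeasurable (fun τ => f τ (w τ))
        (volume.restrict (Set.Icc (0:ℝ) T)) :=
      aesm_comp_lip hT0 hfmeas (hA.mono fun τ hτ => hτ.1) hw
    have h2 : AEStronglyMeasurable (fun τ => G τ (w τ))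
        (volume.restrict (Set.Icc (0:ℝ) T)) :=
      aesm_comp_lip hT0 hGmeas (hA.mono fun τ hτ => hτ.2.1) hw
    have h3 : AEStronglyMeasurable (fun τ => G τ (w τ) (v τ))
        (volume.restrict (Set.Icc (0:ℝ) T)) :=
      isBoundedBilinearMap_apply.continuous.comp_aestronglyMeasurable (h2.prodMk hv)
    have h4 := h1.add h3
    have h5 : AEStronglyMeasurable
        (fun τ => ((t - τ, f τ (w τ) + G τ (w τ) (v τ)) : ℝ × X))
        (volume.restrict (Set.Icc (0:ℝ) T)) :=
      ((continuous_const.sub continuous_id).aestronglyMeasurable).prodMk h4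
    exact hSc.comp_aestronglyMeasurable h5
  -- interval integrability of the integrands
  have intInt : ∀ v : ℝ → EuclideanSpace ℝ (Fin m),
      AEStronglyMeasurable v (volume.restrict (Set.Icc (0:ℝ) T)) →
      (∀ᵐ τ ∂(volume.restrict (Set.Icc (0:ℝ) T)), v τ ∈ U) →
      ∀ s : ℝ, 0 ≤ s → ∀ φ : ℝ → X, ContinuousOn φ (Set.Icc s T) →
      ∀ t p q : ℝ, s ≤ p → p ≤ q → q ≤ t → t ≤ T →
      IntervalIntegrable (fun τ => S (t - τ) (f τ (φ τ) + G τ (φ τ) (v τ)))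
        volume p q := by
    intro v hv hvU s hs φ hφ t p q hsp hpq hqt htT
    have hsT : s ≤ T := by linarith
    set w : ℝ → X := fun τ => φ (min (max τ s) T) with hwdef
    have hwcont : Continuous w :=
      hφ.comp_continuous ((continuous_id.max continuous_const).min continuous_const)
        (fun τ => ⟨le_min (le_max_right _ _) hsT, min_le_right _ _⟩)
    have hweq : ∀ τ ∈ Set.Icc s T, w τ = φ τ := by
      intro τ hτ
      simp only [hwdef]
      rw [max_eq_left hτ.1, min_eq_left hτ.2]
    obtain ⟨R0, hR0⟩ := isCompact_Icc.exists_bound_of_continuousOn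
      (hwcont.continuousOn : ContinuousOn w (Set.Icc (0:ℝ) T))
    set R : ℝ := max R0 0 with hRdef
    have hR : ∀ τ ∈ Set.Icc (0:ℝ) T, ‖w τ‖ ≤ R :=
      fun τ hτ => le_trans (hR0 τ hτ) (le_max_left _ _)
    have hRpos : (0:ℝ) ≤ R := le_max_right _ _
    have hΘm := pkg v hv w hwcont t
    have hbd : ∀ᵐ τ ∂(volume.restrict (Set.Icc (0:ℝ) T)),
        ‖S (c (t - τ)) (f τ (w τ) + G τ (w τ) (v τ))‖ ≤ C * (K * (1 + R)) := by
      filter_upwards [hA, hvnorm hvU, ae_restrict_mem measurableSet_Icc]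
        with τ hAτ hvτ hτI
      have hz : ‖f τ (w τ) + G τ (w τ) (v τ)‖ ≤ K * (1 + R) := by
        refine le_trans (hFbound τ hAτ.1 hAτ.2.1 hAτ.2.2.1 hAτ.2.2.2 (v τ) hvτ (w τ)) ?_
        have := hR τ hτI
        nlinarith
      calc ‖S (c (t - τ)) (f τ (w τ) + G τ (w τ) (v τ))‖
          ≤ C * ‖f τ (w τ) + G τ (w τ) (v τ)‖ := hSop _ (hcmem _) _
        _ ≤ C * (K * (1 + R)) := mul_le_mul_of_nonneg_left hz hCpos.le
    have hΘint : Integrable (fun τ => S (c (t - τ)) (f τ (w τ) + G τ (w τ) (v τ)))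
        (volume.restrict (Set.Icc (0:ℝ) T)) := ⟨hΘm, HasFiniteIntegral.of_bounded hbd⟩
    rw [intervalIntegrable_iff_integrableOn_Ioc_of_le hpq]
    have hsub : Set.Ioc p q ⊆ Set.Icc (0:ℝ) T := by
      intro τ hτ
      exact ⟨by linarith [hτ.1], by linarith [hτ.2]⟩
    have hΘon : IntegrableOn (fun τ => S (c (t - τ)) (f τ (w τ) + G τ (w τ) (v τ)))
        (Set.Ioc p q) volume :=
      (show IntegrableOn (fun τ => S (c (t - τ)) (f τ (w τ) + G τ (w τ) (v τ)))
        (Set.Icc (0:ℝ) T) volume from hΘint).mono_set hsub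
    apply hΘon.congr_fun ?_ measurableSet_Ioc
    intro τ hτ
    have hτs : τ ∈ Set.Icc s T := ⟨by linarith [hτ.1], by linarith [hτ.2]⟩
    have h1 : c (t - τ) = t - τ := hceq _ ⟨by linarith [hτ.2], by linarith [hτ.1]⟩
    simp only [h1, hweq τ hτs]
  -- a priori bound on mild solutions
  have apriori : ∀ v : ℝ → EuclideanSpace ℝ (Fin m),
      (∀ᵐ τ ∂(volume.restrict (Set.Icc (0:ℝ) T)), v τ ∈ U) →
      ∀ s : ℝ, 0 ≤ s → ∀ (x : X) (φ : ℝ → X),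
      IsMildSol T S (fun τ y => f τ y + G τ y (v τ)) s x φ →
      ∀ t ∈ Set.Icc s T, ‖φ t‖ ≤ (C * ‖x‖ + C * K * T) * Real.exp (C * K * T) := by
    intro v hvU s hs x φ hm t ht
    have hsT : s ≤ T := le_trans ht.1 ht.2
    have hA0 : 0 ≤ C * ‖x‖ + C * K * T := by positivity
    have key : ∀ t' ∈ Set.Icc s T,
        ‖φ t'‖ ≤ (C * ‖x‖ + C * K * T) + (C * K) * ∫ τ in s..t', ‖φ τ‖ := by
      intro t' ht'
      have heq := hm.2 t' ht'
      have hb1 : ‖S (t' - s) x‖ ≤ C * ‖x‖ :=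
        hSop _ ⟨by linarith [ht'.1], by linarith [ht'.2]⟩ x
      have hφc : ContinuousOn φ (Set.Icc s t') :=
        hm.1.mono (Set.Icc_subset_Icc le_rfl ht'.2)
      have hbint : IntervalIntegrable (fun τ => C * K * (1 + ‖φ τ‖)) volume s t' :=
        (continuousOn_const.mul (continuousOn_const.add hφc.norm)).intervalIntegrable_of_Icc ht'.1
      have hae : ∀ᵐ τ ∂volume, τ ∈ Set.Icc (0:ℝ) T →
          ((∀ x y : X, ‖f τ x - f τ y‖ ≤ Mf * ‖x - y‖) ∧
            (∀ x y : X, ‖G τ x - G τ y‖ ≤ MG * ‖x - y‖) ∧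
            ‖f τ 0‖ ≤ Mf ∧ ‖G τ 0‖ ≤ MG) ∧ ‖v τ‖ ≤ RU :=
        (ae_restrict_iff' measurableSet_Icc).1 (hA.and (hvnorm hvU))
      have hub : ∀ᵐ τ ∂(volume.restrict (Set.uIoc s t')),
          ‖S (t' - τ) (f τ (φ τ) + G τ (φ τ) (v τ))‖ ≤ C * K * (1 + ‖φ τ‖) := by
        rw [Set.uIoc_of_le ht'.1]
        filter_upwards [ae_restrict_of_ae hae, ae_restrict_mem measurableSet_Ioc]
          with τ h1 h2
        have hτI : τ ∈ Set.Icc (0:ℝ) T := ⟨by linarith [h2.1], by linarith [h2.2, ht'.2]⟩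
        obtain ⟨⟨hlf, hlG, hf0, hG0⟩, hvb⟩ := h1 hτI
        have hz := hFbound τ hlf hlG hf0 hG0 (v τ) hvb (φ τ)
        calc ‖S (t' - τ) (f τ (φ τ) + G τ (φ τ) (v τ))‖
            ≤ C * ‖f τ (φ τ) + G τ (φ τ) (v τ)‖ :=
              hSop _ ⟨by linarith [h2.2], by linarith [h2.1, ht'.2]⟩ _
          _ ≤ C * (K * (1 + ‖φ τ‖)) := mul_le_mul_of_nonneg_left hz hCpos.le
          _ = C * K * (1 + ‖φ τ‖) := by ring
      have hnorm := intervalIntegral.norm_integral_le_abs_of_norm_le hub hbint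
      have hint1 : IntervalIntegrable (fun _ : ℝ => C * K) volume s t' :=
        intervalIntegrable_const
      have hint2 : IntervalIntegrable (fun τ => C * K * ‖φ τ‖) volume s t' :=
        (continuousOn_const.mul hφc.norm).intervalIntegrable_of_Icc ht'.1
      have hval : (∫ τ in s..t', C * K * (1 + ‖φ τ‖))
          = C * K * (t' - s) + C * K * ∫ τ in s..t', ‖φ τ‖ := by
        have hrw : (fun τ => C * K * (1 + ‖φ τ‖)) = fun τ => C * K + C * K * ‖φ τ‖ := by
          funext τ; ring
        rw [hrw, intervalIntegral.integral_add hint1 hint2,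
          intervalIntegral.integral_const, intervalIntegral.integral_const_mul]
        rw [smul_eq_mul]
        ring
      have habs : |∫ τ in s..t', C * K * (1 + ‖φ τ‖)|
          = ∫ τ in s..t', C * K * (1 + ‖φ τ‖) := by
        apply abs_of_nonneg
        apply intervalIntegral.integral_nonneg ht'.1
        intro τ _
        positivity
      calc ‖φ t'‖ = ‖S (t' - s) x + ∫ τ in s..t',
            S (t' - τ) (f τ (φ τ) + G τ (φ τ) (v τ))‖ := by rw [← heq]
        _ ≤ ‖S (t' - s) x‖ + ‖∫ τ in s..t',
            S (t' - τ) (f τ (φ τ) + G τ (φ τ) (v τ))‖ := norm_add_le _ _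
        _ ≤ C * ‖x‖ + (C * K * (t' - s) + C * K * ∫ τ in s..t', ‖φ τ‖) := by
            refine add_le_add hb1 ?_
            refine le_trans hnorm ?_
            rw [habs, hval]
        _ ≤ (C * ‖x‖ + C * K * T) + (C * K) * ∫ τ in s..t', ‖φ τ‖ := by
            have h1 : C * K * (t' - s) ≤ C * K * T := by
              apply mul_le_mul_of_nonneg_left ?_ (by positivity)
              linarith [ht'.1, ht'.2]
            linarith
    have hgr := gronwall_int_s11 hA0 (by positivity : (0:ℝ) ≤ C * K) hm.1.norm
      (fun τ _ => norm_nonneg _) key t ht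
    refine le_trans hgr ?_
    apply mul_le_mul_of_nonneg_left (Real.exp_le_exp.2 ?_) hA0
    nlinarith [mul_nonneg (mul_nonneg hCpos.le hK) hs]
  -- Lipschitz dependence on the initial condition (and uniqueness)
  have lipx : ∀ v : ℝ → EuclideanSpace ℝ (Fin m),
      AEStronglyMeasurable v (volume.restrict (Set.Icc (0:ℝ) T)) →
      (∀ᵐ τ ∂(volume.restrict (Set.Icc (0:ℝ) T)), v τ ∈ U) →
      ∀ s : ℝ, 0 ≤ s → ∀ (x y : X) (φ ψ : ℝ → X),
      IsMildSol T S (fun τ y' => f τ y' + G τ y' (v τ)) s x φ →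
      IsMildSol T S (fun τ y' => f τ y' + G τ y' (v τ)) s y ψ →
      ∀ t ∈ Set.Icc s T, ‖φ t - ψ t‖ ≤ (C * Real.exp (C * K * T)) * ‖x - y‖ := by
    intro v hv hvU s hs x y φ ψ hφm hψm t ht
    have hsT : s ≤ T := le_trans ht.1 ht.2
    have hA0 : 0 ≤ C * ‖x - y‖ := by positivity
    have key : ∀ t' ∈ Set.Icc s T,
        ‖φ t' - ψ t'‖ ≤ C * ‖x - y‖ + (C * K) * ∫ τ in s..t', ‖φ τ - ψ τ‖ := by
      intro t' ht'
      have h1 := hφm.2 t' ht'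
      have h2 := hψm.2 t' ht'
      have hi1 := intInt v hv hvU s hs φ hφm.1 t' s t' le_rfl ht'.1 le_rfl ht'.2
      have hi2 := intInt v hv hvU s hs ψ hψm.1 t' s t' le_rfl ht'.1 le_rfl ht'.2
      have heq : φ t' - ψ t' = S (t' - s) (x - y) + ∫ τ in s..t',
          S (t' - τ) ((f τ (φ τ) + G τ (φ τ) (v τ)) - (f τ (ψ τ) + G τ (ψ τ) (v τ))) := by
        have hsubfn : (fun τ => S (t' - τ)
              ((f τ (φ τ) + G τ (φ τ) (v τ)) - (f τ (ψ τ) + G τ (ψ τ) (v τ))))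
            = fun τ => S (t' - τ) (f τ (φ τ) + G τ (φ τ) (v τ))
              - S (t' - τ) (f τ (ψ τ) + G τ (ψ τ) (v τ)) := by
          funext τ; rw [map_sub]
        rw [hsubfn, intervalIntegral.integral_sub hi1 hi2, h1, h2, map_sub]
        abel
      have hdc : ContinuousOn (fun τ => ‖φ τ - ψ τ‖) (Set.Icc s t') :=
        ((hφm.1.mono (Set.Icc_subset_Icc le_rfl ht'.2)).sub
          (hψm.1.mono (Set.Icc_subset_Icc le_rfl ht'.2))).norm
      have hbint : IntervalIntegrable (fun τ => C * K * ‖φ τ - ψ τ‖) volume s t' :=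
        (continuousOn_const.mul hdc).intervalIntegrable_of_Icc ht'.1
      have hae : ∀ᵐ τ ∂volume, τ ∈ Set.Icc (0:ℝ) T →
          ((∀ x' y' : X, ‖f τ x' - f τ y'‖ ≤ Mf * ‖x' - y'‖) ∧
            (∀ x' y' : X, ‖G τ x' - G τ y'‖ ≤ MG * ‖x' - y'‖) ∧
            ‖f τ 0‖ ≤ Mf ∧ ‖G τ 0‖ ≤ MG) ∧ ‖v τ‖ ≤ RU :=
        (ae_restrict_iff' measurableSet_Icc).1 (hA.and (hvnorm hvU))
      have hub : ∀ᵐ τ ∂(volume.restrict (Set.uIoc s t')),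
          ‖S (t' - τ) ((f τ (φ τ) + G τ (φ τ) (v τ)) - (f τ (ψ τ) + G τ (ψ τ) (v τ)))‖
            ≤ C * K * ‖φ τ - ψ τ‖ := by
        rw [Set.uIoc_of_le ht'.1]
        filter_upwards [ae_restrict_of_ae hae, ae_restrict_mem measurableSet_Ioc]
          with τ hp hmem
        have hτI : τ ∈ Set.Icc (0:ℝ) T :=
          ⟨by linarith [hmem.1], by linarith [hmem.2, ht'.2]⟩
        obtain ⟨⟨hlf, hlG, hf0, hG0⟩, hvb⟩ := hp hτI
        have hz := hFdiff τ hlf hlG (v τ) hvb (φ τ) (ψ τ)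
        calc ‖S (t' - τ) ((f τ (φ τ) + G τ (φ τ) (v τ)) - (f τ (ψ τ) + G τ (ψ τ) (v τ)))‖
            ≤ C * ‖(f τ (φ τ) + G τ (φ τ) (v τ)) - (f τ (ψ τ) + G τ (ψ τ) (v τ))‖ :=
              hSop _ ⟨by linarith [hmem.2], by linarith [hmem.1, ht'.2]⟩ _
          _ ≤ C * (K * ‖φ τ - ψ τ‖) := mul_le_mul_of_nonneg_left hz hCpos.le
          _ = C * K * ‖φ τ - ψ τ‖ := by ring
      have hnorm := intervalIntegral.norm_integral_le_abs_of_norm_le hub hbint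
      have habs : |∫ τ in s..t', C * K * ‖φ τ - ψ τ‖|
          = C * K * ∫ τ in s..t', ‖φ τ - ψ τ‖ := by
        rw [abs_of_nonneg (intervalIntegral.integral_nonneg ht'.1
          (fun τ _ => by positivity)), intervalIntegral.integral_const_mul]
      have hb1 : ‖S (t' - s) (x - y)‖ ≤ C * ‖x - y‖ :=
        hSop _ ⟨by linarith [ht'.1], by linarith [ht'.2]⟩ _
      calc ‖φ t' - ψ t'‖ = ‖S (t' - s) (x - y) + ∫ τ in s..t',
            S (t' - τ) ((f τ (φ τ) + G τ (φ τ) (v τ)) - (f τ (ψ τ) + G τ (ψ τ) (v τ)))‖ := by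
            rw [← heq]
        _ ≤ ‖S (t' - s) (x - y)‖ + ‖∫ τ in s..t',
            S (t' - τ) ((f τ (φ τ) + G τ (φ τ) (v τ)) - (f τ (ψ τ) + G τ (ψ τ) (v τ)))‖ :=
            norm_add_le _ _
        _ ≤ C * ‖x - y‖ + (C * K) * ∫ τ in s..t', ‖φ τ - ψ τ‖ := by
            refine add_le_add hb1 (le_trans hnorm ?_)
            rw [habs]
    have hgr := gronwall_int_s11 hA0 (by positivity : (0:ℝ) ≤ C * K)
      ((hφm.1.sub hψm.1).norm) (fun τ _ => norm_nonneg _) key t ht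
    refine le_trans hgr ?_
    have hexp : Real.exp (C * K * (T - s)) ≤ Real.exp (C * K * T) :=
      Real.exp_le_exp.2 (by nlinarith [mul_nonneg (mul_nonneg hCpos.le hK) hs])
    calc C * ‖x - y‖ * Real.exp (C * K * (T - s))
        ≤ C * ‖x - y‖ * Real.exp (C * K * T) := mul_le_mul_of_nonneg_left hexp hA0
      _ = (C * Real.exp (C * K * T)) * ‖x - y‖ := by ring
  -- semigroup shift identity for mild solutions
  have shift : ∀ v : ℝ → EuclideanSpace ℝ (Fin m),
      AEStronglyMeasurable v (volume.restrict (Set.Icc (0:ℝ) T)) →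
      (∀ᵐ τ ∂(volume.restrict (Set.Icc (0:ℝ) T)), v τ ∈ U) →
      ∀ s : ℝ, 0 ≤ s → ∀ (x : X) (φ : ℝ → X),
      IsMildSol T S (fun τ y => f τ y + G τ y (v τ)) s x φ →
      ∀ a b : ℝ, s ≤ a → a ≤ b → b ≤ T →
      φ b - S (b - a) (φ a) = ∫ τ in a..b,
        S (b - τ) (f τ (φ τ) + G τ (φ τ) (v τ)) := by
    intro v hv hvU s hs x φ hm a b hsa hab hbT
    have e1 := hm.2 b ⟨le_trans hsa hab, hbT⟩
    have e2 := hm.2 a ⟨hsa, le_trans hab hbT⟩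
    have hia : IntervalIntegrable (fun τ => S (a - τ) (f τ (φ τ) + G τ (φ τ) (v τ)))
        volume s a := intInt v hv hvU s hs φ hm.1 a s a le_rfl hsa le_rfl (le_trans hab hbT)
    have hi1 : IntervalIntegrable (fun τ => S (b - τ) (f τ (φ τ) + G τ (φ τ) (v τ)))
        volume s a := intInt v hv hvU s hs φ hm.1 b s a le_rfl hsa hab hbT
    have hi2 : IntervalIntegrable (fun τ => S (b - τ) (f τ (φ τ) + G τ (φ τ) (v τ)))
        volume a b := intInt v hv hvU s hs φ hm.1 b a b hsa hab le_rfl hbT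
    have hSz : S (b - a) (φ a) = S (b - s) x + ∫ τ in s..a,
        S (b - τ) (f τ (φ τ) + G τ (φ τ) (v τ)) := by
      rw [e2, map_add]
      congr 1
      · have h' := hSadd (b - a) (a - s) (by linarith) (by linarith)
        have he : b - a + (a - s) = b - s := by ring
        rw [he] at h'
        rw [h']
        rfl
      · rw [← ContinuousLinearMap.intervalIntegral_comp_comm _ hia]
        apply intervalIntegral.integral_congr
        intro τ hτ
        rw [Set.uIcc_of_le hsa] at hτ
        have h' := hSadd (b - a) (a - τ) (by linarith) (by linarith [hτ.2])
        have he : b - a + (a - τ) = b - τ := by ring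
        rw [he] at h'
        have hx : S (b - τ) (f τ (φ τ) + G τ (φ τ) (v τ))
            = S (b - a) (S (a - τ) (f τ (φ τ) + G τ (φ τ) (v τ))) := by
          rw [h']; rfl
        simpa using hx.symm
    have hsplit : (∫ τ in s..b, S (b - τ) (f τ (φ τ) + G τ (φ τ) (v τ)))
        = (∫ τ in s..a, S (b - τ) (f τ (φ τ) + G τ (φ τ) (v τ)))
          + ∫ τ in a..b, S (b - τ) (f τ (φ τ) + G τ (φ τ) (v τ)) :=
      (intervalIntegral.integral_add_adjacent_intervals hi1 hi2).symm
    rw [e1, hSz, hsplit]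
    abel
  -- flow property
  have flow : ∀ a b : ℝ, 0 ≤ a → a ≤ b → b ≤ T → ∀ x : X,
      Φ a T x = Φ b T (Φ a b x) := by
    intro a b ha hab hbT x
    have haI : a ∈ Set.Icc (0:ℝ) T := ⟨ha, le_trans hab hbT⟩
    have hbI : b ∈ Set.Icc (0:ℝ) T := ⟨le_trans ha hab, hbT⟩
    have hm1 := hΦ a haI x
    have hm2 : IsMildSol T S (fun τ y => f τ y + G τ y (ubar τ)) b (Φ a b x)
        (fun t => Φ a t x) := by
      constructor
      · exact hm1.1.mono (Set.Icc_subset_Icc hab le_rfl)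
      · intro t ht
        have hshift := shift ubar hubar_meas hubar_mem a ha x (fun t => Φ a t x) hm1
          b t hab ht.1 ht.2
        have hshift2 := shift ubar hubar_meas hubar_mem a ha x (fun t => Φ a t x) hm1
          a t le_rfl (le_trans hab ht.1) ht.2
        -- Φ a t x = S (t - b) (Φ a b x) + ∫ b..t
        have := sub_eq_iff_eq_add.1 hshift
        beta_reduce
        rw [this]
        abel
    have hmz := hΦ b hbI (Φ a b x)
    have h0 := lipx ubar hubar_meas hubar_mem b hbI.1 (Φ a b x) (Φ a b x)
      (fun t => Φ b t (Φ a b x)) (fun t => Φ a t x) hmz hm2 T ⟨hbT, le_rfl⟩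
    rw [sub_self, norm_zero, mul_zero] at h0
    have := norm_le_zero_iff.1 h0
    exact (sub_eq_zero.1 this).symm
  -- bound for the trajectory
  obtain ⟨Rx0, hRx0⟩ := isCompact_Icc.exists_bound_of_continuousOn hxu.1
  set Rx : ℝ := max Rx0 0 with hRxdef
  have hRx : ∀ τ ∈ Set.Icc (0:ℝ) T, ‖xu τ‖ ≤ Rx :=
    fun τ hτ => le_trans (hRx0 τ hτ) (le_max_left _ _)
  have hRxpos : (0:ℝ) ≤ Rx := le_max_right _ _
  set B1 : ℝ := (C * Rx + C * K * T) * Real.exp (C * K * T) with hB1def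
  have hB1pos : 0 ≤ B1 := by positivity
  have hΦbound : ∀ a ∈ Set.Icc (0:ℝ) T, ∀ τ ∈ Set.Icc a T, ‖Φ a τ (xu a)‖ ≤ B1 := by
    intro a ha τ hτ
    refine le_trans (apriori ubar hubar_mem a ha.1 (xu a)
      (fun t => Φ a t (xu a)) (hΦ a ha (xu a)) τ hτ) ?_
    have hxa : ‖xu a‖ ≤ Rx := hRx a ha
    have h2 : C * ‖xu a‖ + C * K * T ≤ C * Rx + C * K * T := by nlinarith
    exact mul_le_mul_of_nonneg_right h2 (Real.exp_nonneg _)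
  set C1 : ℝ := C * (K * (1 + B1)) + C * (K * (1 + Rx)) with hC1def
  have hC1pos : 0 ≤ C1 := by positivity
  -- time-Lipschitz estimate
  have est : ∀ a b : ℝ, 0 ≤ a → a ≤ b → b ≤ T →
      ‖Φ a b (xu a) - xu b‖ ≤ C1 * (b - a) := by
    intro a b ha hab hbT
    have haI : a ∈ Set.Icc (0:ℝ) T := ⟨ha, hab.trans hbT⟩
    have hm1 := hΦ a haI (xu a)
    have hinit : Φ a a (xu a) = xu a := by
      have h0 := hm1.2 a ⟨le_rfl, haI.2⟩
      simpa [sub_self, hS0, intervalIntegral.integral_same] using h0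
    have part1 := shift ubar hubar_meas hubar_mem a ha (xu a)
      (fun t => Φ a t (xu a)) hm1 a b le_rfl hab hbT
    simp only [hinit] at part1
    have part2 := shift u hu_meas hu_mem 0 le_rfl x₀ xu hxu a b ha hab hbT
    have hae2 : ∀ᵐ τ ∂volume, τ ∈ Set.Icc (0:ℝ) T →
        ((∀ x y : X, ‖f τ x - f τ y‖ ≤ Mf * ‖x - y‖) ∧
          (∀ x y : X, ‖G τ x - G τ y‖ ≤ MG * ‖x - y‖) ∧
          ‖f τ 0‖ ≤ Mf ∧ ‖G τ 0‖ ≤ MG) ∧ ‖ubar τ‖ ≤ RU ∧ ‖u τ‖ ≤ RU :=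
      (ae_restrict_iff' measurableSet_Icc).1
        (hA.and ((hvnorm hubar_mem).and (hvnorm hu_mem)))
    have hbd1 : ‖∫ τ in a..b, S (b - τ)
        (f τ (Φ a τ (xu a)) + G τ (Φ a τ (xu a)) (ubar τ))‖
        ≤ C * (K * (1 + B1)) * |b - a| := by
      apply intervalIntegral.norm_integral_le_of_norm_le_const_ae
      filter_upwards [hae2] with τ hp hmem
      rw [Set.uIoc_of_le hab] at hmem
      have hτI : τ ∈ Set.Icc (0:ℝ) T := ⟨by linarith [hmem.1], by linarith [hmem.2]⟩
      obtain ⟨⟨hlf, hlG, hf0, hG0⟩, hvb, _⟩ := hp hτI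
      have hz := hFbound τ hlf hlG hf0 hG0 (ubar τ) hvb (Φ a τ (xu a))
      have hy : ‖Φ a τ (xu a)‖ ≤ B1 := hΦbound a haI τ ⟨hmem.1.le, hτI.2⟩
      calc ‖S (b - τ) (f τ (Φ a τ (xu a)) + G τ (Φ a τ (xu a)) (ubar τ))‖
          ≤ C * ‖f τ (Φ a τ (xu a)) + G τ (Φ a τ (xu a)) (ubar τ)‖ :=
            hSop _ ⟨by linarith [hmem.2], by linarith [hmem.1]⟩ _
        _ ≤ C * (K * (1 + B1)) := by
            have h1 : K * (1 + ‖Φ a τ (xu a)‖) ≤ K * (1 + B1) :=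
              mul_le_mul_of_nonneg_left (by linarith) hK
            exact mul_le_mul_of_nonneg_left (le_trans hz h1) hCpos.le
    have hbd2 : ‖∫ τ in a..b, S (b - τ) (f τ (xu τ) + G τ (xu τ) (u τ))‖
        ≤ C * (K * (1 + Rx)) * |b - a| := by
      apply intervalIntegral.norm_integral_le_of_norm_le_const_ae
      filter_upwards [hae2] with τ hp hmem
      rw [Set.uIoc_of_le hab] at hmem
      have hτI : τ ∈ Set.Icc (0:ℝ) T := ⟨by linarith [hmem.1], by linarith [hmem.2]⟩
      obtain ⟨⟨hlf, hlG, hf0, hG0⟩, _, hvb⟩ := hp hτI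
      have hz := hFbound τ hlf hlG hf0 hG0 (u τ) hvb (xu τ)
      have hy : ‖xu τ‖ ≤ Rx := hRx τ hτI
      calc ‖S (b - τ) (f τ (xu τ) + G τ (xu τ) (u τ))‖
          ≤ C * ‖f τ (xu τ) + G τ (xu τ) (u τ)‖ :=
            hSop _ ⟨by linarith [hmem.2], by linarith [hmem.1]⟩ _
        _ ≤ C * (K * (1 + Rx)) := by
            have h1 : K * (1 + ‖xu τ‖) ≤ K * (1 + Rx) :=
              mul_le_mul_of_nonneg_left (by linarith) hK
            exact mul_le_mul_of_nonneg_left (le_trans hz h1) hCpos.le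
    have hsplit : Φ a b (xu a) - xu b
        = (Φ a b (xu a) - S (b - a) (xu a)) - (xu b - S (b - a) (xu a)) := by abel
    rw [abs_of_nonneg (by linarith : (0:ℝ) ≤ b - a)] at hbd1 hbd2
    calc ‖Φ a b (xu a) - xu b‖
        = ‖(Φ a b (xu a) - S (b - a) (xu a)) - (xu b - S (b - a) (xu a))‖ := by
          rw [← hsplit]
      _ ≤ ‖Φ a b (xu a) - S (b - a) (xu a)‖ + ‖xu b - S (b - a) (xu a)‖ :=
          norm_sub_le _ _
      _ ≤ C * (K * (1 + B1)) * (b - a) + C * (K * (1 + Rx)) * (b - a) := by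
          rw [part1, part2]
          exact add_le_add hbd1 hbd2
      _ = C1 * (b - a) := by rw [hC1def]; ring
  -- Lipschitz constant of ℓ on the relevant ball
  set R2 : ℝ := (C * (max Rx B1) + C * K * T) * Real.exp (C * K * T) with hR2def
  obtain ⟨Kl, hKl⟩ := hℓLip (Metric.closedBall (0:X) R2) Metric.isBounded_closedBall
  set Kl' : ℝ := max Kl 0 with hKl'def
  have hKl'pos : (0:ℝ) ≤ Kl' := le_max_right _ _
  set L : ℝ := Kl' * (C * Real.exp (C * K * T)) * C1 with hLdef
  have hL : 0 ≤ L := by positivity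
  refine ⟨L, hL, ?_⟩
  have main : ∀ a b : ℝ, a ∈ Set.Icc (0:ℝ) T → b ∈ Set.Icc (0:ℝ) T → a ≤ b →
      |ℓ (Φ b T (xu b)) - ℓ (Φ a T (xu a))| ≤ L * (b - a) := by
    intro a b ha hb hab
    rw [flow a b ha.1 hab hb.2]
    have hy1R : ‖xu b‖ ≤ Rx := hRx b hb
    have hy2R : ‖Φ a b (xu a)‖ ≤ B1 := hΦbound a ha b ⟨hab, hb.2⟩
    have hdiff : ‖xu b - Φ a b (xu a)‖ ≤ C1 * (b - a) := by
      rw [norm_sub_rev]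
      exact est a b ha.1 hab hb.2
    have hT1 : ‖Φ b T (xu b)‖ ≤ R2 := by
      refine le_trans (apriori ubar hubar_mem b hb.1 (xu b)
        (fun t => Φ b t (xu b)) (hΦ b hb (xu b)) T ⟨hb.2, le_rfl⟩) ?_
      have h1 : ‖xu b‖ ≤ max Rx B1 := le_trans hy1R (le_max_left _ _)
      have h2 : C * ‖xu b‖ + C * K * T ≤ C * max Rx B1 + C * K * T := by nlinarith
      exact mul_le_mul_of_nonneg_right h2 (Real.exp_nonneg _)
    have hT2 : ‖Φ b T (Φ a b (xu a))‖ ≤ R2 := by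
      refine le_trans (apriori ubar hubar_mem b hb.1 (Φ a b (xu a))
        (fun t => Φ b t (Φ a b (xu a))) (hΦ b hb (Φ a b (xu a))) T ⟨hb.2, le_rfl⟩) ?_
      have h1 : ‖Φ a b (xu a)‖ ≤ max Rx B1 := le_trans hy2R (le_max_right _ _)
      have h2 : C * ‖Φ a b (xu a)‖ + C * K * T ≤ C * max Rx B1 + C * K * T := by
        nlinarith
      exact mul_le_mul_of_nonneg_right h2 (Real.exp_nonneg _)
    have hmem1 : Φ b T (xu b) ∈ Metric.closedBall (0:X) R2 := by
      rw [Metric.mem_closedBall, dist_zero_right]; exact hT1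
    have hmem2 : Φ b T (Φ a b (xu a)) ∈ Metric.closedBall (0:X) R2 := by
      rw [Metric.mem_closedBall, dist_zero_right]; exact hT2
    have hlip := hKl _ hmem1 _ hmem2
    have hflow := lipx ubar hubar_meas hubar_mem b hb.1 (xu b) (Φ a b (xu a))
      (fun t => Φ b t (xu b)) (fun t => Φ b t (Φ a b (xu a)))
      (hΦ b hb (xu b)) (hΦ b hb (Φ a b (xu a))) T ⟨hb.2, le_rfl⟩
    calc |ℓ (Φ b T (xu b)) - ℓ (Φ b T (Φ a b (xu a)))|
        ≤ Kl * ‖Φ b T (xu b) - Φ b T (Φ a b (xu a))‖ := hlip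
      _ ≤ Kl' * ‖Φ b T (xu b) - Φ b T (Φ a b (xu a))‖ :=
          mul_le_mul_of_nonneg_right (le_max_left _ _) (norm_nonneg _)
      _ ≤ Kl' * ((C * Real.exp (C * K * T)) * ‖xu b - Φ a b (xu a)‖) :=
          mul_le_mul_of_nonneg_left hflow hKl'pos
      _ ≤ Kl' * ((C * Real.exp (C * K * T)) * (C1 * (b - a))) := by
          refine mul_le_mul_of_nonneg_left ?_ hKl'pos
          exact mul_le_mul_of_nonneg_left hdiff (by positivity)
      _ = L * (b - a) := by rw [hLdef]; ring
  intro a ha b hb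
  rcases le_total a b with h | h
  · rw [abs_of_nonneg (by linarith : (0:ℝ) ≤ b - a)]
    exact main a b ha hb h
  · rw [abs_sub_comm, abs_of_nonpos (by linarith : b - a ≤ 0), neg_sub]
    exact main b a hb ha h
end
end

section
/- Assume (A) and let ū, u ∈ 𝒰, x₀ ∈ X. For s ∈ I define the spliced control u ▷_s ū := 1_{[0,s)} u + 1_{[s,T]} ū ∈ 𝒰 and let z^s := x^{u ▷_s ū} be the corresponding trajectory from x₀. Then there exists a constant M₀ ≥ 0, independent of s, such that for all 0 ≤ a < b ≤ T one has ‖z^b_T − z^a_T‖_X ≤ M₀ (b − a). -/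
open MeasureTheory Set Filter
open scoped RealInnerProductSpace
open scoped Topology

noncomputable section

/-- Carathéodory-type composition: if `h t x` is measurable in `t` for each `x` and
a.e. Lipschitz in `x`, then `t ↦ h t (φ t)` is a.e. strongly measurable for a.e.
strongly measurable `φ`. -/
lemma aesm_comp_carath {X Y : Type*} [NormedAddCommGroup X] [NormedAddCommGroup Y]
    {μ : Measure ℝ} {h : ℝ → X → Y} {L : ℝ}
    (hx : ∀ x : X, AEStronglyMeasurable (fun t => h t x) μ)
    (hLip : ∀ᵐ t ∂μ, ∀ x y : X, ‖h t x - h t y‖ ≤ L * ‖x - y‖)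
    {φ : ℝ → X} (hφ : AEStronglyMeasurable φ μ) :
    AEStronglyMeasurable (fun t => h t (φ t)) μ := by
  classical
  obtain ⟨g, hgSM, hfg⟩ := hφ
  have aux : ∀ ψ : SimpleFunc ℝ X, AEStronglyMeasurable (fun t => h t (ψ t)) μ := by
    intro ψ
    refine SimpleFunc.induction ?_ ?_ ψ
    · intro c s hs
      have heq : (fun t => h t ((SimpleFunc.piecewise s hs (SimpleFunc.const ℝ c)
          (SimpleFunc.const ℝ 0)) t)) = s.piecewise (fun t => h t c) (fun t => h t 0) := by
        funext t
        by_cases hts : t ∈ s <;>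
          simp [SimpleFunc.piecewise_apply, Set.piecewise, hts]
      rw [heq]
      exact AEStronglyMeasurable.piecewise hs
        ((hx c).mono_measure Measure.restrict_le_self)
        ((hx 0).mono_measure Measure.restrict_le_self)
    · intro f g hdisj hf hg
      have hsupp : MeasurableSet (Function.support ⇑f) := by
        have : Function.support ⇑f = (⇑f ⁻¹' {0})ᶜ := by
          ext t; simp [Function.mem_support]
        rw [this]
        exact (f.measurableSet_fiber 0).compl
      have heq : (fun t => h t ((f + g) t))
          = (Function.support ⇑f).piecewise (fun t => h t (f t)) (fun t => h t (g t)) := by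
        funext t
        by_cases hts : t ∈ Function.support ⇑f
        · have hgt : g t = 0 := Function.notMem_support.mp (Set.disjoint_left.mp hdisj hts)
          simp [Set.piecewise_eq_of_mem _ _ _ hts, hgt]
        · have hft : f t = 0 := Function.notMem_support.mp hts
          simp [Set.piecewise_eq_of_notMem _ _ _ hts, hft]
      rw [heq]
      exact AEStronglyMeasurable.piecewise hsupp
        (hf.mono_measure Measure.restrict_le_self)
        (hg.mono_measure Measure.restrict_le_self)
  have hgm : AEStronglyMeasurable (fun t => h t (g t)) μ := by
    refine aestronglyMeasurable_of_tendsto_ae (f := fun n t => h t (hgSM.approx n t))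
      atTop (fun n => aux (hgSM.approx n)) ?_
    filter_upwards [hLip] with t ht
    have h1 : Tendsto (fun n => hgSM.approx n t) atTop (𝓝 (g t)) := hgSM.tendsto_approx t
    rw [tendsto_iff_norm_sub_tendsto_zero] at h1
    rw [← tendsto_sub_nhds_zero_iff]
    refine squeeze_zero_norm (a := fun n => L * ‖hgSM.approx n t - g t‖) (fun n => ht _ _) ?_
    have := h1.const_mul L
    simpa using this
  refine hgm.congr ?_
  filter_upwards [hfg] with t ht
  rw [ht]

/-- Joint continuity of the (clamped) semigroup action. -/
lemma semigroup_joint_continuous {X : Type*} [NormedAddCommGroup X] [NormedSpace ℝ X]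
    {T C : ℝ} (hT : 0 ≤ T) (S : ℝ → X →L[ℝ] X)
    (hScont : ∀ x : X, ContinuousOn (fun σ => S σ x) (Set.Ici (0 : ℝ)))
    (hC : ∀ σ ∈ Set.Icc (0:ℝ) T, ‖S σ‖ ≤ C) :
    Continuous (fun p : ℝ × X => S (min (max p.1 0) T) p.2) := by
  have hprojmem : ∀ σ : ℝ, min (max σ 0) T ∈ Set.Icc (0:ℝ) T :=
    fun σ => ⟨le_min (le_max_right _ _) hT, min_le_right _ _⟩
  have hprojcont : Continuous (fun σ : ℝ => min (max σ 0) T) :=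
    (continuous_id.max continuous_const).min continuous_const
  have hψ : ∀ y : X, Continuous (fun σ => S (min (max σ 0) T) y) := fun y =>
    (hScont y).comp_continuous hprojcont (fun σ => (hprojmem σ).1)
  rw [continuous_iff_continuousAt]
  intro p₀
  have hten : Tendsto (fun p : ℝ × X => S (min (max p.1 0) T) p.2
      - S (min (max p₀.1 0) T) p₀.2) (𝓝 p₀) (𝓝 0) := by
    refine squeeze_zero_norm (a := fun p : ℝ × X => C * ‖p.2 - p₀.2‖
      + ‖S (min (max p.1 0) T) p₀.2 - S (min (max p₀.1 0) T) p₀.2‖) ?_ ?_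
    · intro p
      calc ‖S (min (max p.1 0) T) p.2 - S (min (max p₀.1 0) T) p₀.2‖
          ≤ ‖S (min (max p.1 0) T) p.2 - S (min (max p.1 0) T) p₀.2‖
            + ‖S (min (max p.1 0) T) p₀.2 - S (min (max p₀.1 0) T) p₀.2‖ :=
            norm_sub_le_norm_sub_add_norm_sub _ _ _
        _ ≤ C * ‖p.2 - p₀.2‖
            + ‖S (min (max p.1 0) T) p₀.2 - S (min (max p₀.1 0) T) p₀.2‖ := by
            gcongr
            calc ‖S (min (max p.1 0) T) p.2 - S (min (max p.1 0) T) p₀.2‖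
                = ‖S (min (max p.1 0) T) (p.2 - p₀.2)‖ := by rw [map_sub]
              _ ≤ ‖S (min (max p.1 0) T)‖ * ‖p.2 - p₀.2‖ := ContinuousLinearMap.le_opNorm _ _
              _ ≤ C * ‖p.2 - p₀.2‖ :=
                  mul_le_mul_of_nonneg_right (hC _ (hprojmem _)) (norm_nonneg _)
    · have t1 : Tendsto (fun p : ℝ × X => C * ‖p.2 - p₀.2‖) (𝓝 p₀) (𝓝 (C * ‖p₀.2 - p₀.2‖)) :=
        (continuous_const.mul ((continuous_snd.sub continuous_const).norm)).tendsto p₀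
      have t2 : Tendsto (fun p : ℝ × X =>
          ‖S (min (max p.1 0) T) p₀.2 - S (min (max p₀.1 0) T) p₀.2‖) (𝓝 p₀)
          (𝓝 ‖S (min (max p₀.1 0) T) p₀.2 - S (min (max p₀.1 0) T) p₀.2‖) := by
        exact ((((hψ p₀.2).comp continuous_fst).sub continuous_const).norm).tendsto p₀
      have := t1.add t2
      simpa using this
  have := tendsto_sub_nhds_zero_iff.mp hten
  exact this

/-- Integral form of Grönwall's inequality on `[0, T]`. -/
lemma gronwall_integral_form {g : ℝ → ℝ} {T A K : ℝ} (hT : 0 ≤ T)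
    (hg : ContinuousOn g (Set.Icc 0 T)) (hg0 : ∀ t ∈ Set.Icc (0:ℝ) T, 0 ≤ g t)
    (hA : 0 ≤ A) (hK : 0 ≤ K)
    (h : ∀ t ∈ Set.Icc (0:ℝ) T, g t ≤ A + K * ∫ τ in (0:ℝ)..t, g τ) :
    ∀ t ∈ Set.Icc (0:ℝ) T, g t ≤ A * Real.exp (K * t) := by
  have hgI : IntegrableOn g (Set.Icc 0 T) volume := hg.integrableOn_Icc
  have hΦcont : ContinuousOn (fun t => ∫ τ in (0:ℝ)..t, g τ) (Set.Icc 0 T) := by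
    have := intervalIntegral.continuousOn_primitive_interval
      (a := (0:ℝ)) (b := T) (μ := volume) (f := g) (by rwa [Set.uIcc_of_le hT])
    rwa [Set.uIcc_of_le hT] at this
  have hΦnn : ∀ x ∈ Set.Icc (0:ℝ) T, 0 ≤ ∫ τ in (0:ℝ)..x, g τ := by
    intro x hx
    exact intervalIntegral.integral_nonneg hx.1 (fun u hu => hg0 u ⟨hu.1, hu.2.trans hx.2⟩)
  have hΦder : ∀ x ∈ Set.Ico (0:ℝ) T,
      HasDerivWithinAt (fun t => ∫ τ in (0:ℝ)..t, g τ) (g x) (Set.Ici x) x := by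
    intro x hx
    have hI : IntervalIntegrable g volume 0 x := by
      apply ContinuousOn.intervalIntegrable
      rw [Set.uIcc_of_le hx.1]
      exact hg.mono (Set.Icc_subset_Icc le_rfl hx.2.le)
    have hcw : ContinuousWithinAt g (Set.Ioi x) x := by
      have h1 : ContinuousWithinAt g (Set.Icc x T) x :=
        (hg x ⟨hx.1, hx.2.le⟩).mono (Set.Icc_subset_Icc hx.1 le_rfl)
      have h2 : ContinuousWithinAt g (Set.Ici x) x := by
        rwa [ContinuousWithinAt, nhdsWithin_Icc_eq_nhdsGE hx.2] at h1
      exact h2.mono Set.Ioi_subset_Ici_self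
    have hmeas : StronglyMeasurableAtFilter g (𝓝[>] x) volume := by
      refine ⟨Set.Icc x T, ?_, (hg.mono (Set.Icc_subset_Icc hx.1 le_rfl)).aestronglyMeasurable
        measurableSet_Icc⟩
      exact Filter.mem_of_superset (Ioc_mem_nhdsGT_of_mem ⟨le_rfl, hx.2⟩) Set.Ioc_subset_Icc_self
    exact intervalIntegral.integral_hasDerivWithinAt_right hI hmeas hcw
  have key := norm_le_gronwallBound_of_norm_deriv_right_le (a := 0) (b := T)
    (f := fun t => ∫ τ in (0:ℝ)..t, g τ) (f' := g) (δ := 0) (K := K) (ε := A)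
    hΦcont hΦder (by simp) ?_
  · intro t ht
    have h2 := key t ht
    rw [Real.norm_eq_abs, abs_of_nonneg (hΦnn t ht), sub_zero] at h2
    have h3 : g t ≤ A + K * gronwallBound 0 K A t :=
      (h t ht).trans (by gcongr)
    refine h3.trans ?_
    rcases eq_or_lt_of_le hK with hK0 | hK0
    · rw [← hK0] at *
      simpa using h3.trans (by simp)
    · have hv := congrFun (gronwallBound_of_K_ne_0 (δ := 0) (K := K) (ε := A)
        (ne_of_gt hK0)) t
      rw [hv, zero_mul, zero_add]
      have hKA : K * (A / K * (Real.exp (K * t) - 1)) = A * (Real.exp (K * t) - 1) := by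
        field_simp
      rw [hKA]
      exact le_of_eq (by ring)
  · intro x hx
    rw [Real.norm_eq_abs, abs_of_nonneg (hg0 x (Set.Ico_subset_Icc_self hx)),
      Real.norm_eq_abs, abs_of_nonneg (hΦnn x (Set.Ico_subset_Icc_self hx))]
    have := h x (Set.Ico_subset_Icc_self hx)
    linarith

set_option maxHeartbeats 4000000 in
theorem spliced_aux_main
    {X : Type*} [NormedAddCommGroup X] [NormedSpace ℝ X] [CompleteSpace X]
    {m : ℕ} {T : ℝ} (hT : 0 < T)
    (S : ℝ → X →L[ℝ] X)
    (hS0 : S 0 = ContinuousLinearMap.id ℝ X)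
    (hSadd : ∀ a b : ℝ, 0 ≤ a → 0 ≤ b → S (a + b) = (S a).comp (S b))
    (hScont : ∀ x : X, ContinuousOn (fun σ => S σ x) (Set.Ici (0 : ℝ)))
    (U : Set (EuclideanSpace ℝ (Fin m))) (hUcpt : IsCompact U) (hUcvx : Convex ℝ U)
    (f : ℝ → X → X) (G : ℝ → X → EuclideanSpace ℝ (Fin m) →L[ℝ] X)
    {Mf MG : ℝ} (hMf : 0 ≤ Mf) (hMG : 0 ≤ MG)
    (hfmeas : ∀ x : X,
      AEStronglyMeasurable (fun t => f t x) (volume.restrict (Set.Icc (0:ℝ) T)))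
    (hGmeas : ∀ x : X,
      AEStronglyMeasurable (fun t => G t x) (volume.restrict (Set.Icc (0:ℝ) T)))
    (hA : ∀ᵐ t ∂(volume.restrict (Set.Icc (0:ℝ) T)),
        (∀ x y : X, ‖f t x - f t y‖ ≤ Mf * ‖x - y‖) ∧
        (∀ x y : X, ‖G t x - G t y‖ ≤ MG * ‖x - y‖) ∧
        ‖f t 0‖ ≤ Mf ∧ ‖G t 0‖ ≤ MG)
    (ubar u : ℝ → EuclideanSpace ℝ (Fin m))
    (hubar_meas : AEStronglyMeasurable ubar (volume.restrict (Set.Icc (0:ℝ) T)))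
    (hubar_mem : ∀ᵐ t ∂(volume.restrict (Set.Icc (0:ℝ) T)), ubar t ∈ U)
    (hu_meas : AEStronglyMeasurable u (volume.restrict (Set.Icc (0:ℝ) T)))
    (hu_mem : ∀ᵐ t ∂(volume.restrict (Set.Icc (0:ℝ) T)), u t ∈ U)
    (x₀ : X) (z : ℝ → ℝ → X)
    (hz : ∀ s ∈ Set.Icc (0:ℝ) T,
      IsMildSol T S
        (fun τ y => f τ y + G τ y (if τ < s then u τ else ubar τ)) 0 x₀ (z s)) :
    ∃ M₀ : ℝ, 0 ≤ M₀ ∧ ∀ a b : ℝ, 0 ≤ a → a < b → b ≤ T →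
      ‖z b T - z a T‖ ≤ M₀ * (b - a) := by
  classical
  set μ := volume.restrict (Set.Icc (0:ℝ) T) with hμdef
  -- bound on controls
  obtain ⟨R₀, hR₀⟩ := isBounded_iff_forall_norm_le.mp hUcpt.isBounded
  obtain ⟨R, hRdef⟩ : ∃ r : ℝ, r = max R₀ 0 := ⟨_, rfl⟩
  have hRnn : (0:ℝ) ≤ R := by rw [hRdef]; exact le_max_right _ _
  have hRU : ∀ w ∈ U, ‖w‖ ≤ R := fun w hw => (hR₀ w hw).trans
    (by rw [hRdef]; exact le_max_left _ _)
  -- bound on the semigroup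
  obtain ⟨C₀, hC₀⟩ : ∃ C', ∀ i : (Set.Icc (0:ℝ) T), ‖S i‖ ≤ C' := by
    apply banach_steinhaus
    intro x
    obtain ⟨Cx, hCx⟩ := IsCompact.exists_bound_of_continuousOn isCompact_Icc
      ((hScont x).mono Set.Icc_subset_Ici_self)
    exact ⟨Cx, fun i => hCx i i.2⟩
  obtain ⟨C, hCdef⟩ : ∃ c : ℝ, c = max C₀ 1 := ⟨_, rfl⟩
  have hC1 : (1:ℝ) ≤ C := by rw [hCdef]; exact le_max_right _ _
  have hCnn : (0:ℝ) ≤ C := zero_le_one.trans hC1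
  have hCop : ∀ σ ∈ Set.Icc (0:ℝ) T, ‖S σ‖ ≤ C := fun σ hσ =>
    (hC₀ ⟨σ, hσ⟩).trans (by rw [hCdef]; exact le_max_left _ _)
  have hCS : ∀ σ ∈ Set.Icc (0:ℝ) T, ∀ w : X, ‖S σ w‖ ≤ C * ‖w‖ := fun σ hσ w =>
    ((S σ).le_opNorm w).trans (mul_le_mul_of_nonneg_right (hCop σ hσ) (norm_nonneg w))
  obtain ⟨L, hLdef⟩ : ∃ l : ℝ, l = Mf + MG * R := ⟨_, rfl⟩
  have hLnn : 0 ≤ L := by rw [hLdef]; positivity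
  -- spliced controls and vector fields
  set v : ℝ → ℝ → EuclideanSpace ℝ (Fin m) := fun s τ => if τ < s then u τ else ubar τ
    with hvdef
  set F : ℝ → ℝ → X → X := fun s τ y => f τ y + G τ y (v s τ) with hFdef
  have hzc : ∀ s ∈ Set.Icc (0:ℝ) T, ContinuousOn (z s) (Set.Icc 0 T) :=
    fun s hs => (hz s hs).1
  have hzeq : ∀ s ∈ Set.Icc (0:ℝ) T, ∀ t ∈ Set.Icc (0:ℝ) T,
      z s t = S t x₀ + ∫ τ in (0:ℝ)..t, S (t - τ) (F s τ (z s τ)) := by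
    intro s hs t ht
    have h0 := (hz s hs).2 t ht
    simpa only [sub_zero] using h0
  -- a.e. properties
  have hae : ∀ᵐ τ ∂μ,
      (∀ x y : X, ‖f τ x - f τ y‖ ≤ Mf * ‖x - y‖) ∧
      (∀ x y : X, ‖G τ x - G τ y‖ ≤ MG * ‖x - y‖) ∧
      ‖f τ 0‖ ≤ Mf ∧ ‖G τ 0‖ ≤ MG ∧ (∀ s : ℝ, ‖v s τ‖ ≤ R) := by
    filter_upwards [hA, hu_mem, hubar_mem] with τ h1 h2 h3
    refine ⟨h1.1, h1.2.1, h1.2.2.1, h1.2.2.2, fun s => ?_⟩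
    by_cases hts : τ < s
    · simpa only [hvdef, if_pos hts] using hRU _ h2
    · simpa only [hvdef, if_neg hts] using hRU _ h3
  have hFbound : ∀ᵐ τ ∂μ, ∀ s : ℝ,
      (∀ y : X, ‖F s τ y‖ ≤ L * (1 + ‖y‖)) ∧
      (∀ y y' : X, ‖F s τ y - F s τ y'‖ ≤ L * ‖y - y'‖) := by
    filter_upwards [hae] with τ hτ
    obtain ⟨hfl, hGl, hf0, hG0, hvR⟩ := hτ
    intro s
    have hfy : ∀ y : X, ‖f τ y‖ ≤ Mf * (1 + ‖y‖) := by
      intro y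
      calc ‖f τ y‖ = ‖(f τ y - f τ 0) + f τ 0‖ := by rw [sub_add_cancel]
        _ ≤ ‖f τ y - f τ 0‖ + ‖f τ 0‖ := norm_add_le _ _
        _ ≤ Mf * ‖y - 0‖ + Mf := add_le_add (hfl y 0) hf0
        _ = Mf * (1 + ‖y‖) := by rw [sub_zero]; ring
    have hGy : ∀ y : X, ‖G τ y‖ ≤ MG * (1 + ‖y‖) := by
      intro y
      calc ‖G τ y‖ = ‖(G τ y - G τ 0) + G τ 0‖ := by rw [sub_add_cancel]
        _ ≤ ‖G τ y - G τ 0‖ + ‖G τ 0‖ := norm_add_le _ _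
        _ ≤ MG * ‖y - 0‖ + MG := add_le_add (hGl y 0) hG0
        _ = MG * (1 + ‖y‖) := by rw [sub_zero]; ring
    constructor
    · intro y
      have h2 : ‖G τ y (v s τ)‖ ≤ (MG * (1 + ‖y‖)) * R :=
        ((G τ y).le_opNorm _).trans
          (mul_le_mul (hGy y) (hvR s) (norm_nonneg _) (by positivity))
      calc ‖F s τ y‖ ≤ ‖f τ y‖ + ‖G τ y (v s τ)‖ := norm_add_le _ _
        _ ≤ Mf * (1 + ‖y‖) + (MG * (1 + ‖y‖)) * R := add_le_add (hfy y) h2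
        _ = L * (1 + ‖y‖) := by rw [hLdef]; ring
    · intro y y'
      have h1 : ‖f τ y - f τ y'‖ ≤ Mf * ‖y - y'‖ := hfl y y'
      have h2 : ‖G τ y (v s τ) - G τ y' (v s τ)‖ ≤ (MG * ‖y - y'‖) * R := by
        have heq : G τ y (v s τ) - G τ y' (v s τ) = (G τ y - G τ y') (v s τ) := by
          simp [ContinuousLinearMap.sub_apply]
        rw [heq]
        exact ((G τ y - G τ y').le_opNorm _).trans
          (mul_le_mul (hGl y y') (hvR s) (norm_nonneg _) (by positivity))
      calc ‖F s τ y - F s τ y'‖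
          = ‖(f τ y - f τ y') + (G τ y (v s τ) - G τ y' (v s τ))‖ := by
            simp only [hFdef]; congr 1; abel
        _ ≤ ‖f τ y - f τ y'‖ + ‖G τ y (v s τ) - G τ y' (v s τ)‖ := norm_add_le _ _
        _ ≤ Mf * ‖y - y'‖ + (MG * ‖y - y'‖) * R := add_le_add h1 h2
        _ = L * ‖y - y'‖ := by rw [hLdef]; ring
  -- measurability
  have hvmeas : ∀ s : ℝ, AEStronglyMeasurable (v s) μ := by
    intro s
    have heq : v s = (Set.Iio s).piecewise u ubar := by
      funext τ
      by_cases hts : τ < s <;> simp [hvdef, Set.piecewise, Set.mem_Iio, hts]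
    rw [heq]
    exact AEStronglyMeasurable.piecewise measurableSet_Iio
      (hu_meas.mono_measure Measure.restrict_le_self)
      (hubar_meas.mono_measure Measure.restrict_le_self)
  have hzmeas : ∀ s ∈ Set.Icc (0:ℝ) T, AEStronglyMeasurable (z s) μ :=
    fun s hs => ((hz s hs).1).aestronglyMeasurable measurableSet_Icc
  have hLipf : ∀ᵐ τ ∂μ, ∀ x y : X, ‖f τ x - f τ y‖ ≤ Mf * ‖x - y‖ :=
    hA.mono fun τ h => h.1
  have hLipG : ∀ᵐ τ ∂μ, ∀ x y : X, ‖G τ x - G τ y‖ ≤ MG * ‖x - y‖ :=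
    hA.mono fun τ h => h.2.1
  have hFz : ∀ s ∈ Set.Icc (0:ℝ) T, AEStronglyMeasurable (fun τ => F s τ (z s τ)) μ := by
    intro s hs
    have h1 : AEStronglyMeasurable (fun τ => f τ (z s τ)) μ :=
      aesm_comp_carath hfmeas hLipf (hzmeas s hs)
    have h2 : AEStronglyMeasurable (fun τ => G τ (z s τ) (v s τ)) μ := by
      have hp : AEStronglyMeasurable
          (fun τ => ((G τ (z s τ) : EuclideanSpace ℝ (Fin m) →L[ℝ] X), v s τ)) μ :=
        (aesm_comp_carath hGmeas hLipG (hzmeas s hs)).prodMk (hvmeas s)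
      exact (isBoundedBilinearMap_apply.continuous).comp_aestronglyMeasurable hp
    exact h1.add h2
  have hQ : Continuous (fun p : ℝ × X => S (min (max p.1 0) T) p.2) :=
    semigroup_joint_continuous hT.le S hScont hCop
  have hproj : ∀ σ ∈ Set.Icc (0:ℝ) T, min (max σ 0) T = σ := fun σ hσ => by
    rw [max_eq_left hσ.1, min_eq_left hσ.2]
  have htrans : ∀ t : ℝ, t ≤ T → ∀ {p : ℝ → Prop}, (∀ᵐ τ ∂μ, p τ) →
      (∀ᵐ τ ∂(volume.restrict (Set.Ioc (0:ℝ) t)), p τ) := by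
    intro t ht p hp
    have hsub : Set.Ioc (0:ℝ) t ⊆ Set.Icc (0:ℝ) T := fun τ hτ => ⟨hτ.1.le, hτ.2.trans ht⟩
    exact hp.filter_mono (ae_mono (Measure.restrict_mono hsub le_rfl))
  have hΨmeas : ∀ s ∈ Set.Icc (0:ℝ) T, ∀ t ∈ Set.Icc (0:ℝ) T,
      AEStronglyMeasurable (fun τ => S (t - τ) (F s τ (z s τ)))
        (volume.restrict (Set.Ioc (0:ℝ) t)) := by
    intro s hs t ht
    have hsub : Set.Ioc (0:ℝ) t ⊆ Set.Icc (0:ℝ) T := fun τ hτ => ⟨hτ.1.le, hτ.2.trans ht.2⟩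
    have hmono : volume.restrict (Set.Ioc (0:ℝ) t) ≤ μ :=
      Measure.restrict_mono hsub le_rfl
    have h1 : AEStronglyMeasurable (fun τ => S (min (max (t - τ) 0) T) (F s τ (z s τ)))
        (volume.restrict (Set.Ioc (0:ℝ) t)) := by
      have hp : AEStronglyMeasurable (fun τ => (t - τ, F s τ (z s τ)))
          (volume.restrict (Set.Ioc (0:ℝ) t)) :=
        ((continuous_const.sub continuous_id).aestronglyMeasurable).prodMk
          ((hFz s hs).mono_measure hmono)
      exact hQ.comp_aestronglyMeasurable hp
    refine h1.congr ?_
    filter_upwards [ae_restrict_mem measurableSet_Ioc] with τ hτ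
    rw [hproj (t - τ) ⟨by linarith [hτ.2], by linarith [hτ.1, ht.2]⟩]
  -- uniform bound on trajectories
  obtain ⟨A₀, hA₀def⟩ : ∃ a : ℝ, a = C * ‖x₀‖ + C * L * T := ⟨_, rfl⟩
  have hA₀nn : 0 ≤ A₀ := by rw [hA₀def]; positivity
  obtain ⟨B, hBdef⟩ : ∃ b : ℝ, b = A₀ * Real.exp (C * L * T) := ⟨_, rfl⟩
  have hBnn : 0 ≤ B := by rw [hBdef]; positivity
  have hBz : ∀ s ∈ Set.Icc (0:ℝ) T, ∀ t ∈ Set.Icc (0:ℝ) T, ‖z s t‖ ≤ B := by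
    intro s hs
    have key : ∀ t ∈ Set.Icc (0:ℝ) T, ‖z s t‖ ≤ A₀ * Real.exp ((C * L) * t) := by
      apply gronwall_integral_form hT.le (continuous_norm.comp_continuousOn (hzc s hs))
        (fun t _ => norm_nonneg _) hA₀nn (by positivity)
      intro t ht
      have hsub' : Set.uIcc (0:ℝ) t ⊆ Set.Icc 0 T := by
        rw [Set.uIcc_of_le ht.1]; exact Set.Icc_subset_Icc le_rfl ht.2
      have hg_int : IntervalIntegrable (fun τ => ‖z s τ‖) volume 0 t :=
        (continuous_norm.comp_continuousOn ((hzc s hs).mono hsub')).intervalIntegrable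
      have hint : IntervalIntegrable (fun τ => C * L * (1 + ‖z s τ‖)) volume 0 t := by
        apply ContinuousOn.intervalIntegrable
        exact continuousOn_const.mul (continuousOn_const.add
          (continuous_norm.comp_continuousOn ((hzc s hs).mono hsub')))
      have hbound : ∀ᵐ τ ∂(volume.restrict (Set.uIoc (0:ℝ) t)),
          ‖S (t - τ) (F s τ (z s τ))‖ ≤ C * L * (1 + ‖z s τ‖) := by
        rw [Set.uIoc_of_le ht.1]
        filter_upwards [htrans t ht.2 hFbound, ae_restrict_mem measurableSet_Ioc]
          with τ hτF hτm
        have h1 := (hτF s).1 (z s τ)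
        have h2 := hCS (t - τ) ⟨by linarith [hτm.2], by linarith [hτm.1, ht.2]⟩
          (F s τ (z s τ))
        calc ‖S (t - τ) (F s τ (z s τ))‖ ≤ C * ‖F s τ (z s τ)‖ := h2
          _ ≤ C * (L * (1 + ‖z s τ‖)) := mul_le_mul_of_nonneg_left h1 hCnn
          _ = C * L * (1 + ‖z s τ‖) := by ring
      have hnorm := intervalIntegral.norm_integral_le_abs_of_norm_le hbound hint
      have hpos : 0 ≤ ∫ τ in (0:ℝ)..t, C * L * (1 + ‖z s τ‖) :=
        intervalIntegral.integral_nonneg ht.1 (fun τ _ => by positivity)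
      rw [abs_of_nonneg hpos] at hnorm
      have hval : ∫ τ in (0:ℝ)..t, C * L * (1 + ‖z s τ‖)
          = C * L * t + C * L * ∫ τ in (0:ℝ)..t, ‖z s τ‖ := by
        have h1 : ∀ τ : ℝ, C * L * (1 + ‖z s τ‖) = C * L + C * L * ‖z s τ‖ :=
          fun τ => by ring
        simp_rw [h1]
        rw [intervalIntegral.integral_add intervalIntegrable_const
          (hg_int.const_mul (C * L)), intervalIntegral.integral_const,
          intervalIntegral.integral_const_mul]
        simp only [smul_eq_mul, sub_zero]
        ring
      have hIpos : 0 ≤ ∫ τ in (0:ℝ)..t, ‖z s τ‖ :=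
        intervalIntegral.integral_nonneg ht.1 (fun τ _ => norm_nonneg _)
      have hfin : ‖z s t‖ ≤ C * ‖x₀‖ + (C * L * t + C * L * ∫ τ in (0:ℝ)..t, ‖z s τ‖) := by
        rw [hzeq s hs t ht]
        calc ‖S t x₀ + ∫ τ in (0:ℝ)..t, S (t - τ) (F s τ (z s τ))‖
            ≤ ‖S t x₀‖ + ‖∫ τ in (0:ℝ)..t, S (t - τ) (F s τ (z s τ))‖ := norm_add_le _ _
          _ ≤ C * ‖x₀‖ + (C * L * t + C * L * ∫ τ in (0:ℝ)..t, ‖z s τ‖) := by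
              rw [← hval]; exact add_le_add (hCS t ht x₀) hnorm
      have hCLt : C * L * t ≤ C * L * T :=
        mul_le_mul_of_nonneg_left ht.2 (by positivity)
      show ‖z s t‖ ≤ A₀ + C * L * ∫ τ in (0:ℝ)..t, ‖z s τ‖
      rw [hA₀def]
      linarith
    intro t ht
    refine (key t ht).trans ?_
    rw [hBdef]
    have : Real.exp (C * L * t) ≤ Real.exp (C * L * T) :=
      Real.exp_le_exp.mpr (mul_le_mul_of_nonneg_left ht.2 (by positivity))
    exact mul_le_mul_of_nonneg_left this hA₀nn
  -- interval integrability of the integrand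
  have hΨint : ∀ s ∈ Set.Icc (0:ℝ) T, ∀ t ∈ Set.Icc (0:ℝ) T,
      IntervalIntegrable (fun τ => S (t - τ) (F s τ (z s τ))) volume 0 t := by
    intro s hs t ht
    rw [intervalIntegrable_iff_integrableOn_Ioc_of_le ht.1]
    refine Integrable.mono' (g := fun _ => C * (L * (1 + B)))
      (integrableOn_const measure_Ioc_lt_top.ne) (hΨmeas s hs t ht) ?_
    filter_upwards [htrans t ht.2 hFbound, ae_restrict_mem measurableSet_Ioc]
      with τ hτF hτm
    have hτI : τ ∈ Set.Icc (0:ℝ) T := ⟨hτm.1.le, hτm.2.trans ht.2⟩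
    have h2 := hCS (t - τ) ⟨by linarith [hτm.2], by linarith [hτm.1, ht.2]⟩
      (F s τ (z s τ))
    calc ‖S (t - τ) (F s τ (z s τ))‖ ≤ C * ‖F s τ (z s τ)‖ := h2
      _ ≤ C * (L * (1 + ‖z s τ‖)) := mul_le_mul_of_nonneg_left ((hτF s).1 (z s τ)) hCnn
      _ ≤ C * (L * (1 + B)) := by
          have := hBz s hs τ hτI
          gcongr
  -- main estimate
  refine ⟨2 * C * L * (1 + B) * Real.exp (C * L * T), by positivity, ?_⟩
  intro a b ha hab hbT
  have haI : a ∈ Set.Icc (0:ℝ) T := ⟨ha, hab.le.trans hbT⟩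
  have hbI : b ∈ Set.Icc (0:ℝ) T := ⟨ha.trans hab.le, hbT⟩
  have hdc : ContinuousOn (fun t => ‖z b t - z a t‖) (Set.Icc 0 T) :=
    continuous_norm.comp_continuousOn ((hzc b hbI).sub (hzc a haI))
  have key : ∀ t ∈ Set.Icc (0:ℝ) T,
      ‖z b t - z a t‖ ≤ (2 * C * L * (1 + B) * (b - a)) * Real.exp ((C * L) * t) := by
    apply gronwall_integral_form hT.le hdc (fun t _ => norm_nonneg _)
      (mul_nonneg (by positivity) (by linarith)) (by positivity)
    intro t ht
    have hdiff : z b t - z a t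
        = ∫ τ in (0:ℝ)..t, (S (t - τ) (F b τ (z b τ)) - S (t - τ) (F a τ (z a τ))) := by
      rw [hzeq b hbI t ht, hzeq a haI t ht,
        intervalIntegral.integral_sub (hΨint b hbI t ht) (hΨint a haI t ht)]
      abel
    obtain ⟨c₂, hc₂def⟩ : ∃ c : ℝ, c = 2 * C * L * (1 + B) := ⟨_, rfl⟩
    have hc₂nn : 0 ≤ c₂ := by rw [hc₂def]; positivity
    set gbnd := fun τ => C * L * ‖z b τ - z a τ‖
      + (Set.Ico a b).indicator (fun _ => c₂) τ with hgbnd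
    have hsub' : Set.uIcc (0:ℝ) t ⊆ Set.Icc 0 T := by
      rw [Set.uIcc_of_le ht.1]; exact Set.Icc_subset_Icc le_rfl ht.2
    have hd_int : IntervalIntegrable (fun τ => C * L * ‖z b τ - z a τ‖) volume 0 t :=
      (continuousOn_const.mul (hdc.mono hsub')).intervalIntegrable
    have hind_int : IntervalIntegrable ((Set.Ico a b).indicator (fun _ => c₂)) volume 0 t :=
      (((integrable_indicator_iff measurableSet_Ico).mpr
        (integrableOn_const measure_Ico_lt_top.ne))).intervalIntegrable
    have hgint : IntervalIntegrable gbnd volume 0 t := hd_int.add hind_int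
    have hbound : ∀ᵐ τ ∂(volume.restrict (Set.uIoc (0:ℝ) t)),
        ‖S (t - τ) (F b τ (z b τ)) - S (t - τ) (F a τ (z a τ))‖ ≤ gbnd τ := by
      rw [Set.uIoc_of_le ht.1]
      filter_upwards [htrans t ht.2 hFbound, ae_restrict_mem measurableSet_Ioc]
        with τ hτF hτm
      have hτI : τ ∈ Set.Icc (0:ℝ) T := ⟨hτm.1.le, hτm.2.trans ht.2⟩
      have htτ : t - τ ∈ Set.Icc (0:ℝ) T :=
        ⟨by linarith [hτm.2], by linarith [hτm.1, ht.2]⟩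
      have hSsub : S (t - τ) (F b τ (z b τ)) - S (t - τ) (F a τ (z a τ))
          = S (t - τ) (F b τ (z b τ) - F a τ (z a τ)) := (map_sub _ _ _).symm
      rw [hSsub]
      by_cases hmem : τ ∈ Set.Ico a b
      · have h1 : ‖F b τ (z b τ)‖ ≤ L * (1 + B) := by
          refine ((hτF b).1 (z b τ)).trans ?_
          have := hBz b hbI τ hτI
          gcongr
        have h2 : ‖F a τ (z a τ)‖ ≤ L * (1 + B) := by
          refine ((hτF a).1 (z a τ)).trans ?_
          have := hBz a haI τ hτI
          gcongr
        have h3 : ‖F b τ (z b τ) - F a τ (z a τ)‖ ≤ 2 * (L * (1 + B)) := by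
          calc ‖F b τ (z b τ) - F a τ (z a τ)‖
              ≤ ‖F b τ (z b τ)‖ + ‖F a τ (z a τ)‖ := norm_sub_le _ _
            _ ≤ 2 * (L * (1 + B)) := by linarith
        calc ‖S (t - τ) (F b τ (z b τ) - F a τ (z a τ))‖
            ≤ C * ‖F b τ (z b τ) - F a τ (z a τ)‖ := hCS _ htτ _
          _ ≤ C * (2 * (L * (1 + B))) := mul_le_mul_of_nonneg_left h3 hCnn
          _ ≤ gbnd τ := by
              rw [hgbnd]
              simp only [Set.indicator_of_mem hmem, hc₂def]
              have hnn : 0 ≤ C * L * ‖z b τ - z a τ‖ := by positivity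
              nlinarith
      · have hvv : v b τ = v a τ := by
          rw [hvdef]
          simp only []
          rcases not_and_or.mp ((Set.mem_Ico).not.mp hmem) with hlt | hge
          · push_neg at hlt
            rw [if_pos hlt, if_pos (hlt.trans hab)]
          · push_neg at hge
            rw [if_neg (not_lt.mpr hge), if_neg (not_lt.mpr (hab.le.trans hge))]
        have hFeq : F a τ (z a τ) = F b τ (z a τ) := by
          rw [hFdef]
          simp only [hvv]
        have hlip : ‖F b τ (z b τ) - F a τ (z a τ)‖ ≤ L * ‖z b τ - z a τ‖ := by
          rw [hFeq]
          exact (hτF b).2 (z b τ) (z a τ)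
        calc ‖S (t - τ) (F b τ (z b τ) - F a τ (z a τ))‖
            ≤ C * (L * ‖z b τ - z a τ‖) :=
              (hCS _ htτ _).trans (mul_le_mul_of_nonneg_left hlip hCnn)
          _ ≤ gbnd τ := by
              rw [hgbnd]
              simp only [Set.indicator_of_notMem hmem]
              exact le_of_eq (by ring)
    have hnorm : ‖z b t - z a t‖ ≤ |∫ τ in (0:ℝ)..t, gbnd τ| := by
      rw [hdiff]
      exact intervalIntegral.norm_integral_le_abs_of_norm_le hbound hgint
    have hgnn : ∀ τ : ℝ, 0 ≤ gbnd τ := by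
      intro τ
      rw [hgbnd]
      have : 0 ≤ (Set.Ico a b).indicator (fun _ => c₂) τ :=
        Set.indicator_nonneg (fun _ _ => hc₂nn) τ
      positivity
    have habs : |∫ τ in (0:ℝ)..t, gbnd τ| = ∫ τ in (0:ℝ)..t, gbnd τ :=
      abs_of_nonneg (intervalIntegral.integral_nonneg ht.1 (fun τ _ => hgnn τ))
    have hsplit : ∫ τ in (0:ℝ)..t, gbnd τ
        = (∫ τ in (0:ℝ)..t, C * L * ‖z b τ - z a τ‖)
          + ∫ τ in (0:ℝ)..t, (Set.Ico a b).indicator (fun _ => c₂) τ := by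
      rw [hgbnd]
      exact intervalIntegral.integral_add hd_int hind_int
    have hCL : ∫ τ in (0:ℝ)..t, C * L * ‖z b τ - z a τ‖
        = C * L * ∫ τ in (0:ℝ)..t, ‖z b τ - z a τ‖ :=
      intervalIntegral.integral_const_mul _ _
    have hind : ∫ τ in (0:ℝ)..t, (Set.Ico a b).indicator (fun _ => c₂) τ ≤ c₂ * (b - a) := by
      rw [intervalIntegral.integral_of_le ht.1,
        MeasureTheory.integral_indicator measurableSet_Ico, setIntegral_const, smul_eq_mul]
      have hm : (volume.restrict (Set.Ioc (0:ℝ) t)) (Set.Ico a b)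
          ≤ ENNReal.ofReal (b - a) := by
        rw [Measure.restrict_apply measurableSet_Ico]
        refine (measure_mono Set.inter_subset_left).trans ?_
        rw [Real.volume_Ico]
      have hmr := ENNReal.toReal_le_of_le_ofReal (by linarith) hm
      calc ((volume.restrict (Set.Ioc (0:ℝ) t)) (Set.Ico a b)).toReal * c₂
          ≤ (b - a) * c₂ := mul_le_mul_of_nonneg_right hmr hc₂nn
        _ = c₂ * (b - a) := mul_comm _ _
    rw [habs, hsplit, hCL] at hnorm
    have hIpos : 0 ≤ ∫ τ in (0:ℝ)..t, ‖z b τ - z a τ‖ :=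
      intervalIntegral.integral_nonneg ht.1 (fun τ _ => norm_nonneg _)
    show ‖z b t - z a t‖ ≤ 2 * C * L * (1 + B) * (b - a)
      + C * L * ∫ τ in (0:ℝ)..t, ‖z b τ - z a τ‖
    rw [← hc₂def]
    linarith
  have hfin := key T ⟨hT.le, le_rfl⟩
  calc ‖z b T - z a T‖ ≤ (2 * C * L * (1 + B) * (b - a)) * Real.exp ((C * L) * T) := hfin
    _ = (2 * C * L * (1 + B) * Real.exp (C * L * T)) * (b - a) := by ring


/-- for the spliced controls `u ▷_s ū = 1_{[0,s)} u + 1_{[s,T]} ū` and the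
corresponding trajectories `z^s` from `x₀`, the terminal states are Lipschitz in the
splicing time: `‖z^b_T − z^a_T‖ ≤ M₀ (b − a)` with `M₀` independent of `a, b`. -/
theorem spliced_trajectory_terminal_lipschitz
    {X : Type*} [NormedAddCommGroup X] [NormedSpace ℝ X] [CompleteSpace X]
    {m : ℕ} {T : ℝ} (hT : 0 < T)
    (S : ℝ → X →L[ℝ] X)
    (hS0 : S 0 = ContinuousLinearMap.id ℝ X)
    (hSadd : ∀ a b : ℝ, 0 ≤ a → 0 ≤ b → S (a + b) = (S a).comp (S b))
    (hScont : ∀ x : X, ContinuousOn (fun σ => S σ x) (Set.Ici (0 : ℝ)))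
    (U : Set (EuclideanSpace ℝ (Fin m))) (hUcpt : IsCompact U) (hUcvx : Convex ℝ U)
    (f : ℝ → X → X) (G : ℝ → X → EuclideanSpace ℝ (Fin m) →L[ℝ] X)
    {Mf MG : ℝ} (hMf : 0 ≤ Mf) (hMG : 0 ≤ MG)
    (hfmeas : ∀ x : X,
      AEStronglyMeasurable (fun t => f t x) (volume.restrict (Set.Icc (0:ℝ) T)))
    (hGmeas : ∀ x : X,
      AEStronglyMeasurable (fun t => G t x) (volume.restrict (Set.Icc (0:ℝ) T)))
    (hA : ∀ᵐ t ∂(volume.restrict (Set.Icc (0:ℝ) T)),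
        (∀ x y : X, ‖f t x - f t y‖ ≤ Mf * ‖x - y‖) ∧
        (∀ x y : X, ‖G t x - G t y‖ ≤ MG * ‖x - y‖) ∧
        ‖f t 0‖ ≤ Mf ∧ ‖G t 0‖ ≤ MG)
    (ubar u : ℝ → EuclideanSpace ℝ (Fin m))
    (hubar_meas : AEStronglyMeasurable ubar (volume.restrict (Set.Icc (0:ℝ) T)))
    (hubar_mem : ∀ᵐ t ∂(volume.restrict (Set.Icc (0:ℝ) T)), ubar t ∈ U)
    (hu_meas : AEStronglyMeasurable u (volume.restrict (Set.Icc (0:ℝ) T)))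
    (hu_mem : ∀ᵐ t ∂(volume.restrict (Set.Icc (0:ℝ) T)), u t ∈ U)
    (x₀ : X) (z : ℝ → ℝ → X)
    (hz : ∀ s ∈ Set.Icc (0:ℝ) T,
      IsMildSol T S
        (fun τ y => f τ y + G τ y (if τ < s then u τ else ubar τ)) 0 x₀ (z s)) :
    ∃ M₀ : ℝ, 0 ≤ M₀ ∧ ∀ a b : ℝ, 0 ≤ a → a < b → b ≤ T →
      ‖z b T - z a T‖ ≤ M₀ * (b - a) := by
  exact spliced_aux_main hT S hS0 hSadd hScont U hUcpt hUcvx f G hMf hMG hfmeas hGmeas hA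
    ubar u hubar_meas hubar_mem hu_meas hu_mem x₀ z hz
end
end

section
/- Let X be a real Banach space and G : I × X → L(ℝ^m; X) satisfy: for every x ∈ X the map τ ↦ G_τ(x) is strongly measurable, and for a.e. τ the map x ↦ G_τ(x) is M_G-Lipschitz. Let K ⊂ X be a compact set. Then there exists a set J ⊂ I of full Lebesgue measure such that for every t ∈ J and every x ∈ K, (1/h) ∫_t^{t+h} ‖G_τ(x) − G_t(x)‖_{L(ℝ^m;X)} dτ → 0 as h ↓ 0; in particular, along any continuous trajectory t ↦ x_t with values in K, ∫_t^{t+h} ‖G_τ(x_t) − G_t(x_t)‖ dτ = o(h) for a.e. t ∈ I. -/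
open MeasureTheory Set Filter

noncomputable section

/-- Covering lemma: a set all of whose points see null mass of the set in some
right-neighbourhood is itself Lebesgue-null. -/
theorem null_of_right_local_null (B : Set ℝ)
    (hB : ∀ t ∈ B, ∃ h > 0, volume (B ∩ Set.Ioc t (t + h)) = 0) :
    volume B = 0 := by
  classical
  choose! h hpos hnull using hB
  set V : Set ℝ := ⋃ t : B, Set.Ioo (t : ℝ) (t + h t) with hV
  obtain ⟨Tc, hTc, hTV⟩ := TopologicalSpace.isOpen_iUnion_countable
    (fun t : B => Set.Ioo (t : ℝ) ((t : ℝ) + h t)) (fun t => isOpen_Ioo)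
  have hBV : volume (B ∩ V) = 0 := by
    have hsub : B ∩ V ⊆ ⋃ t ∈ Tc, B ∩ Set.Ioc (t : ℝ) ((t : ℝ) + h t) := by
      rintro x ⟨hxB, hxV⟩
      rw [hV, ← hTV] at hxV
      simp only [Set.mem_iUnion] at hxV ⊢
      obtain ⟨t, ht, hx⟩ := hxV
      exact ⟨t, ht, hxB, Ioo_subset_Ioc_self hx⟩
    refine measure_mono_null hsub ?_
    rw [measure_biUnion_null_iff hTc]
    intro t ht
    exact hnull t t.2
  have hBVc : (B \ V).Countable := by
    have key : ∀ t ∈ B \ V, ∃ qq : ℚ, (t : ℝ) < qq ∧ (qq : ℝ) < t + h t := by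
      intro t ht
      exact exists_rat_btwn (by linarith [hpos t ht.1])
    choose! q hq1 hq2 using key
    have aux : ∀ s ∈ B \ V, ∀ t ∈ B \ V, s < t → q s ≠ q t := by
      intro s hs t ht hlt hst
      have htV : t ∉ Set.Ioo (s : ℝ) (s + h s) := by
        intro hmem
        exact ht.2 (Set.mem_iUnion.mpr ⟨⟨s, hs.1⟩, hmem⟩)
      have h1 : s + h s ≤ t := by
        rw [Set.mem_Ioo, not_and_or] at htV
        rcases htV with h' | h'
        · exact absurd hlt (by simpa using h')
        · exact not_lt.mp h'
      have h2 := hq2 s hs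
      have h3 := hq1 t ht
      have h4 : (q s : ℝ) < q t := by linarith
      rw [hst] at h4
      exact lt_irrefl _ h4
    refine countable_of_injective_of_countable_image (f := fun t => q t) ?_
      (Set.to_countable _)
    intro s hs t ht hst
    rcases lt_trichotomy s t with hlt | heq | hgt
    · exact absurd hst (aux s hs t ht hlt)
    · exact heq
    · exact absurd hst.symm (aux t ht s hs hgt)
  refine le_antisymm ?_ zero_le
  calc volume B ≤ volume (B ∩ V) + volume (B \ V) :=
        (measure_mono (by simp [Set.inter_union_diff])).trans (measure_union_le _ _)
    _ = 0 := by rw [hBV, hBVc.measure_zero]; simp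

/-- One-sided Lebesgue point property of an integrable function, at a.e. point. -/
theorem onesided_lebesgue_points {E : Type*} [NormedAddCommGroup E]
    {f : ℝ → E} (hf : Integrable f volume) :
    ∀ᵐ s : ℝ, Tendsto (fun h : ℝ => h⁻¹ * ∫ τ in Set.Ioc s (s + h), ‖f τ - f s‖)
      (nhdsWithin 0 (Set.Ioi 0)) (nhds 0) := by
  filter_upwards [IsUnifLocDoublingMeasure.ae_tendsto_average_norm_sub
    (μ := (volume : Measure ℝ)) hf.locallyIntegrable 1] with s hs
  have havg : Tendsto (fun h : ℝ => ⨍ y in Metric.closedBall s h, ‖f y - f s‖)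
      (nhdsWithin 0 (Set.Ioi 0)) (nhds 0) := by
    refine hs (fun h => s) id tendsto_id ?_
    filter_upwards [self_mem_nhdsWithin] with h (hh : 0 < h)
    simpa using by positivity
  refine squeeze_zero' ?_ ?_ (by simpa using havg.const_mul 2)
  · filter_upwards [self_mem_nhdsWithin] with h (hh : 0 < h)
    have : 0 ≤ ∫ τ in Set.Ioc s (s + h), ‖f τ - f s‖ :=
      integral_nonneg fun τ => norm_nonneg _
    positivity
  · filter_upwards [self_mem_nhdsWithin] with h (hh : 0 < h)
    have hInt : IntegrableOn (fun τ => ‖f τ - f s‖) (Metric.closedBall s h) volume :=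
      (hf.integrableOn.sub (integrableOn_const
        (measure_closedBall_lt_top.ne))).norm
    have hsub : Set.Ioc s (s + h) ⊆ Metric.closedBall s h := by
      intro τ hτ
      rw [Real.closedBall_eq_Icc]
      exact ⟨by linarith [hτ.1], hτ.2⟩
    have hmono : (∫ τ in Set.Ioc s (s + h), ‖f τ - f s‖)
        ≤ ∫ τ in Metric.closedBall s h, ‖f τ - f s‖ := by
      refine setIntegral_mono_set hInt ?_ (HasSubset.Subset.eventuallyLE hsub)
      filter_upwards with τ using norm_nonneg _
    have hvol : (volume (Metric.closedBall s h)).toReal = 2 * h := by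
      rw [Real.volume_closedBall]
      rw [ENNReal.toReal_ofReal (by linarith)]
    rw [setAverage_eq, measureReal_def, hvol, smul_eq_mul]
    have heq : 2 * ((2 * h)⁻¹ * ∫ τ in Metric.closedBall s h, ‖f τ - f s‖)
        = h⁻¹ * ∫ τ in Metric.closedBall s h, ‖f τ - f s‖ := by
      field_simp
    rw [heq]
    exact mul_le_mul_of_nonneg_left hmono (inv_nonneg.2 hh.le)

/-- Lebesgue-point property of `t ↦ G_t`, uniform over a compact set `K`:
there is a full-measure set `J ⊆ I` such that for every `t ∈ J` and every `x ∈ K` the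
averages `(1/h)∫_t^{t+h} ‖G_τ(x) − G_t(x)‖ dτ` tend to `0` as `h ↓ 0`; in particular,
along any continuous trajectory with values in `K`, `∫_t^{t+h} ‖G_τ(x_t) − G_t(x_t)‖ dτ
= o(h)` for a.e. `t ∈ I`. -/
theorem lebesgue_point_uniform_on_compact
    {X : Type*} [NormedAddCommGroup X] [NormedSpace ℝ X]
    {m : ℕ} {T : ℝ} (hT : 0 < T)
    (G : ℝ → X → EuclideanSpace ℝ (Fin m) →L[ℝ] X)
    (MG : ℝ) (hMG : 0 ≤ MG)
    (hGmeas : ∀ x : X,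
      AEStronglyMeasurable (fun τ => G τ x) (volume.restrict (Set.Icc (0:ℝ) T)))
    (hGlip : ∀ᵐ τ ∂(volume.restrict (Set.Icc (0:ℝ) T)),
      ∀ x y : X, ‖G τ x - G τ y‖ ≤ MG * ‖x - y‖)
    (K : Set X) (hK : IsCompact K) :
    ∃ J : Set ℝ, J ⊆ Set.Ico (0:ℝ) T ∧ volume (Set.Icc (0:ℝ) T \ J) = 0 ∧
      (∀ t ∈ J, ∀ x ∈ K,
        Tendsto (fun h : ℝ => h⁻¹ * ∫ τ in t..t + h, ‖G τ x - G t x‖)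
          (nhdsWithin 0 (Set.Ioi 0)) (nhds 0)) ∧
      (∀ xtraj : ℝ → X, ContinuousOn xtraj (Set.Icc (0:ℝ) T) →
        (∀ t ∈ Set.Icc (0:ℝ) T, xtraj t ∈ K) →
        ∀ᵐ t ∂(volume.restrict (Set.Icc (0:ℝ) T)),
          Tendsto
            (fun h : ℝ => h⁻¹ * ∫ τ in t..t + h, ‖G τ (xtraj t) - G t (xtraj t)‖)
            (nhdsWithin 0 (Set.Ioi 0)) (nhds 0)) := by
  classical
  have hIcoIcc : volume (Set.Icc (0:ℝ) T \ Set.Ico 0 T) = 0 := by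
    refine measure_mono_null (fun t ht => ?_) (measure_singleton T)
    have h1 := ht.1.2
    have h2 := ht.2
    simp only [Set.mem_Ico, not_and, not_lt] at h2
    have : t = T := le_antisymm h1 (h2 ht.1.1)
    simp [this]
  rcases K.eq_empty_or_nonempty with rfl | ⟨x₀, hx₀⟩
  · refine ⟨Set.Ico 0 T, subset_rfl, hIcoIcc, ?_, ?_⟩
    · intro t _ x hx
      exact absurd hx (Set.notMem_empty x)
    · intro xtraj _ hmem
      exact absurd (hmem 0 ⟨le_rfl, hT.le⟩) (Set.notMem_empty _)
  -- separable approximation of K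
  obtain ⟨c, hc_count, hKc⟩ := hK.isSeparable
  have hcne : c.Nonempty := by
    rcases c.eq_empty_or_nonempty with rfl | hne
    · simp only [closure_empty] at hKc
      exact absurd (hKc hx₀) (Set.notMem_empty _)
    · exact hne
  obtain ⟨u, hu⟩ := hc_count.exists_eq_range hcne
  -- notation
  set good : ℝ → X → Prop := fun t x =>
    Tendsto (fun h : ℝ => h⁻¹ * ∫ τ in t..t + h, ‖G τ x - G t x‖)
      (nhdsWithin 0 (Set.Ioi 0)) (nhds 0) with hgood
  set L : Set ℝ := {τ : ℝ | ∀ x y : X, ‖G τ x - G τ y‖ ≤ MG * ‖x - y‖} with hL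
  have hlip_on : ∀ s : Set ℝ, s ⊆ Set.Icc 0 T →
      ∀ᵐ τ ∂(volume.restrict s), τ ∈ L :=
    fun s hs => hGlip.filter_mono (ae_mono (Measure.restrict_mono hs le_rfl))
  have hmeas_on : ∀ (x : X) (s : Set ℝ), s ⊆ Set.Icc 0 T →
      AEStronglyMeasurable (fun τ => G τ x) (volume.restrict s) :=
    fun x s hs => (hGmeas x).mono_measure (Measure.restrict_mono hs le_rfl)
  -- points with no right-integrability of ‖G · x₀‖ are trivially good for every x
  have hnonW : ∀ t ∈ Set.Ico (0:ℝ) T,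
      (∀ h : ℝ, 0 < h → t + h ≤ T →
        ¬ IntegrableOn (fun τ => ‖G τ x₀‖) (Set.Ioc t (t + h)) volume) →
      ∀ x : X, good t x := by
    intro t htI hni x
    have hev : ∀ᶠ h in nhdsWithin (0:ℝ) (Set.Ioi 0),
        h⁻¹ * ∫ τ in t..t + h, ‖G τ x - G t x‖ = 0 := by
      have hmem : Set.Ioo (0:ℝ) (T - t) ∈ nhdsWithin (0:ℝ) (Set.Ioi 0) :=
        Ioo_mem_nhdsGT_of_mem ⟨le_rfl, by linarith [htI.2]⟩
      filter_upwards [hmem] with h hh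
      have hsub : Set.Ioc t (t + h) ⊆ Set.Icc 0 T :=
        fun τ hτ => ⟨by linarith [htI.1, hτ.1], by linarith [hτ.2, hh.2]⟩
      have hni' : ¬ IntervalIntegrable (fun τ => ‖G τ x - G t x‖) volume t (t + h) := by
        intro hInt
        apply hni h hh.1 (by linarith [hh.2])
        have hIoc : IntegrableOn (fun τ => ‖G τ x - G t x‖) (Set.Ioc t (t + h)) volume := by
          rw [intervalIntegrable_iff, Set.uIoc_of_le (by linarith [hh.1])] at hInt
          exact hInt
        have hcint : Integrable (fun τ => ‖G τ x - G t x‖ + (MG * ‖x₀ - x‖ + ‖G t x‖))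
            (volume.restrict (Set.Ioc t (t + h))) :=
          hIoc.add (integrableOn_const measure_Ioc_lt_top.ne)
        refine Integrable.mono' hcint ((hmeas_on x₀ _ hsub).norm) ?_
        filter_upwards [hlip_on _ hsub] with τ hτ
        have h1 : ‖G τ x₀ - G τ x‖ ≤ MG * ‖x₀ - x‖ := hτ x₀ x
        have h2 : ‖G τ x₀‖ ≤ ‖G τ x₀ - G τ x‖ + ‖G τ x - G t x‖ + ‖G t x‖ := by
          calc ‖G τ x₀‖ = ‖(G τ x₀ - G τ x) + (G τ x - G t x) + G t x‖ := by
                congr 1; abel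
            _ ≤ ‖G τ x₀ - G τ x‖ + ‖G τ x - G t x‖ + ‖G t x‖ := norm_add₃_le
        simp only [norm_norm]
        linarith
      rw [intervalIntegral.integral_undef hni', mul_zero]
    exact Tendsto.congr' (hev.mono fun _ e => e.symm) tendsto_const_nhds
  -- the bad set is null
  set Bad : Set ℝ := {t | t ∈ Set.Ico (0:ℝ) T ∧ ¬ ∀ n : ℕ, good t (u n)} with hBadDef
  have hBadnull : volume Bad = 0 := by
    apply null_of_right_local_null
    rintro t ⟨htI, htn⟩
    by_cases htW : ∃ h : ℝ, 0 < h ∧ t + h ≤ T ∧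
        IntegrableOn (fun τ => ‖G τ x₀‖) (Set.Ioc t (t + h)) volume
    swap
    · exfalso
      push_neg at htW
      exact htn fun n => hnonW t htI (fun h h1 h2 => htW h h1 h2) (u n)
    obtain ⟨h₀, h₀pos, h₀le, h₀int⟩ := htW
    refine ⟨h₀, h₀pos, ?_⟩
    have hIocsub : Set.Ioc t (t + h₀) ⊆ Set.Icc 0 T :=
      fun τ hτ => ⟨by linarith [htI.1, hτ.1], by linarith [hτ.2]⟩
    set F : ℕ → ℝ → (EuclideanSpace ℝ (Fin m) →L[ℝ] X) :=
      fun n => (Set.Ioc t (t + h₀)).indicator (fun τ => G τ (u n)) with hF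
    have hFint : ∀ n, Integrable (F n) volume := by
      intro n
      rw [hF]
      refine (integrable_indicator_iff (f := fun τ => G τ (u n)) (μ := volume)
        (measurableSet_Ioc (a := t) (b := t + h₀))).mpr ?_
      have hcint : Integrable (fun τ => ‖G τ x₀‖ + MG * ‖u n - x₀‖)
          (volume.restrict (Set.Ioc t (t + h₀))) :=
        h₀int.add (integrableOn_const measure_Ioc_lt_top.ne)
      refine Integrable.mono' hcint (hmeas_on (u n) _ hIocsub) ?_
      filter_upwards [hlip_on _ hIocsub] with τ hτ
      have h1 : ‖G τ (u n) - G τ x₀‖ ≤ MG * ‖u n - x₀‖ := hτ (u n) x₀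
      calc ‖G τ (u n)‖ = ‖(G τ (u n) - G τ x₀) + G τ x₀‖ := by congr 1; abel
        _ ≤ ‖G τ (u n) - G τ x₀‖ + ‖G τ x₀‖ := norm_add_le _ _
        _ ≤ ‖G τ x₀‖ + MG * ‖u n - x₀‖ := by linarith
    have main : ∀ᵐ s : ℝ, s ∈ Set.Ioo t (t + h₀) → ∀ n : ℕ, good s (u n) := by
      have key := ae_all_iff.2 fun n => onesided_lebesgue_points (hFint n)
      filter_upwards [key] with s hsF hs n
      have hev : ∀ᶠ h in nhdsWithin (0:ℝ) (Set.Ioi 0),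
          h⁻¹ * ∫ τ in Set.Ioc s (s + h), ‖F n τ - F n s‖
            = h⁻¹ * ∫ τ in s..s + h, ‖G τ (u n) - G s (u n)‖ := by
        have hmem : Set.Ioo (0:ℝ) (t + h₀ - s) ∈ nhdsWithin (0:ℝ) (Set.Ioi 0) :=
          Ioo_mem_nhdsGT_of_mem ⟨le_rfl, by linarith [hs.2]⟩
        filter_upwards [hmem] with h hh
        have hsmem : s ∈ Set.Ioc t (t + h₀) := ⟨hs.1, by linarith [hs.2]⟩
        have hFs : F n s = G s (u n) := Set.indicator_of_mem hsmem _
        rw [intervalIntegral.integral_of_le (by linarith [hh.1] : s ≤ s + h)]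
        congr 1
        refine setIntegral_congr_fun measurableSet_Ioc fun τ hτ => ?_
        have hτmem : τ ∈ Set.Ioc t (t + h₀) :=
          ⟨lt_trans hs.1 hτ.1, by linarith [hτ.2, hh.2]⟩
        have hFτ : F n τ = G τ (u n) := Set.indicator_of_mem hτmem _
        rw [hFτ, hFs]
      exact Tendsto.congr' hev (hsF n)
    have hsub2 : Bad ∩ Set.Ioc t (t + h₀) ⊆
        {t + h₀} ∪ {s : ℝ | ¬ (s ∈ Set.Ioo t (t + h₀) → ∀ n : ℕ, good s (u n))} := by
      rintro s ⟨⟨hsI, hsbad⟩, hsIoc⟩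
      rcases eq_or_lt_of_le hsIoc.2 with heq | hlt
      · exact Or.inl heq
      · exact Or.inr fun hyp => hsbad (hyp ⟨hsIoc.1, hlt⟩)
    refine measure_mono_null hsub2 (measure_union_null (measure_singleton _) ?_)
    exact ae_iff.mp main
  -- the full-measure good set
  set Jset : Set ℝ := {t | t ∈ Set.Ico (0:ℝ) T ∧ t ∈ L ∧ ∀ n : ℕ, good t (u n)} with hJset
  have hJnull : volume (Set.Icc (0:ℝ) T \ Jset) = 0 := by
    have hLnull : volume ({τ | τ ∉ L} ∩ Set.Icc 0 T) = 0 := by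
      have := ae_iff.mp hGlip
      rwa [Measure.restrict_apply' measurableSet_Icc] at this
    have hsub : Set.Icc (0:ℝ) T \ Jset
        ⊆ (Set.Icc (0:ℝ) T \ Set.Ico 0 T) ∪ ({τ | τ ∉ L} ∩ Set.Icc 0 T) ∪ Bad := by
      rintro s ⟨hsIcc, hsJ⟩
      by_cases hsIco : s ∈ Set.Ico (0:ℝ) T
      · by_cases hsL : s ∈ L
        · refine Or.inr ⟨hsIco, fun hall => hsJ ⟨hsIco, hsL, hall⟩⟩
        · exact Or.inl (Or.inr ⟨hsL, hsIcc⟩)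
      · exact Or.inl (Or.inl ⟨hsIcc, hsIco⟩)
    exact measure_mono_null hsub
      (measure_union_null (measure_union_null hIcoIcc hLnull) hBadnull)
  have hJgood : ∀ t ∈ Jset, ∀ x ∈ K, good t x := by
    rintro t ⟨htI, htL, htn⟩ x hx
    simp only [hgood]
    rw [NormedAddCommGroup.tendsto_nhds_zero]
    intro ε hε
    set ε' : ℝ := ε / (4 * (MG + 1)) with hε'def
    have hε'pos : 0 < ε' := by positivity
    obtain ⟨y, hyc, hyd⟩ := Metric.mem_closure_iff.mp (hKc hx) ε' hε'pos
    rw [hu] at hyc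
    obtain ⟨n, rfl⟩ := hyc
    have hterm := (htn n).eventually (gt_mem_nhds (half_pos hε))
    have hmem : Set.Ioo (0:ℝ) (T - t) ∈ nhdsWithin (0:ℝ) (Set.Ioi 0) :=
      Ioo_mem_nhdsGT_of_mem ⟨le_rfl, by linarith [htI.2]⟩
    filter_upwards [hterm, hmem] with h hh1 hh2
    have hpos : 0 < h := hh2.1
    have hsub : Set.Ioc t (t + h) ⊆ Set.Icc 0 T :=
      fun τ hτ => ⟨by linarith [htI.1, hτ.1], by linarith [hτ.2, hh2.2]⟩
    have hdist : ‖x - u n‖ < ε' := by rwa [← dist_eq_norm]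
    -- key inequality
    have hA0 : 0 ≤ ∫ τ in t..t + h, ‖G τ x - G t x‖ :=
      intervalIntegral.integral_nonneg (by linarith) fun τ _ => norm_nonneg _
    have hkey : (∫ τ in t..t + h, ‖G τ x - G t x‖)
        ≤ (∫ τ in t..t + h, ‖G τ (u n) - G t (u n)‖) + h * (2 * MG * ε') := by
      by_cases hi : IntervalIntegrable (fun τ => ‖G τ x - G t x‖) volume t (t + h)
      · have hIoc : IntegrableOn (fun τ => ‖G τ x - G t x‖) (Set.Ioc t (t + h)) volume := by
          rw [intervalIntegrable_iff, Set.uIoc_of_le (by linarith)] at hi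
          exact hi
        have hbound : ∀ᵐ τ ∂(volume.restrict (Set.Ioc t (t + h))),
            ‖G τ (u n) - G t (u n)‖ ≤ ‖G τ x - G t x‖ + 2 * MG * ε' ∧
            ‖G τ x - G t x‖ ≤ ‖G τ (u n) - G t (u n)‖ + 2 * MG * ε' := by
          filter_upwards [hlip_on _ hsub] with τ hτ
          have h1 : ‖G τ (u n) - G τ x‖ ≤ MG * ‖u n - x‖ := hτ (u n) x
          have h2 : ‖G t (u n) - G t x‖ ≤ MG * ‖u n - x‖ := htL (u n) x
          have hxn : ‖u n - x‖ = ‖x - u n‖ := by rw [norm_sub_rev]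
          have hMGb : MG * ‖u n - x‖ ≤ MG * ε' := by
            rw [hxn]
            exact mul_le_mul_of_nonneg_left hdist.le hMG
          constructor
          · calc ‖G τ (u n) - G t (u n)‖
                = ‖(G τ (u n) - G τ x) + (G τ x - G t x) + (G t x - G t (u n))‖ := by
                  congr 1; abel
              _ ≤ ‖G τ (u n) - G τ x‖ + ‖G τ x - G t x‖ + ‖G t x - G t (u n)‖ :=
                  norm_add₃_le
              _ ≤ ‖G τ x - G t x‖ + 2 * MG * ε' := by
                  rw [norm_sub_rev (G t x)]
                  linarith
          · calc ‖G τ x - G t x‖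
                = ‖(G τ x - G τ (u n)) + (G τ (u n) - G t (u n)) + (G t (u n) - G t x)‖ := by
                  congr 1; abel
              _ ≤ ‖G τ x - G τ (u n)‖ + ‖G τ (u n) - G t (u n)‖ + ‖G t (u n) - G t x‖ :=
                  norm_add₃_le
              _ ≤ ‖G τ (u n) - G t (u n)‖ + 2 * MG * ε' := by
                  rw [norm_sub_rev (G τ x)]
                  linarith
        have hgInt : IntegrableOn (fun τ => ‖G τ (u n) - G t (u n)‖)
            (Set.Ioc t (t + h)) volume := by
          have hcint : Integrable (fun τ => ‖G τ x - G t x‖ + 2 * MG * ε')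
              (volume.restrict (Set.Ioc t (t + h))) :=
            hIoc.add (integrableOn_const measure_Ioc_lt_top.ne)
          refine Integrable.mono' hcint
            (((hmeas_on (u n) _ hsub).sub aestronglyMeasurable_const).norm) ?_
          filter_upwards [hbound] with τ hτ
          simp only [norm_norm]
          exact hτ.1
        have hmono : (∫ τ in Set.Ioc t (t + h), ‖G τ x - G t x‖)
            ≤ ∫ τ in Set.Ioc t (t + h), (‖G τ (u n) - G t (u n)‖ + 2 * MG * ε') := by
          refine integral_mono_ae hIoc
            (hgInt.add (integrableOn_const measure_Ioc_lt_top.ne)) ?_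
          filter_upwards [hbound] with τ hτ using hτ.2
        have hsplit : (∫ τ in Set.Ioc t (t + h), (‖G τ (u n) - G t (u n)‖ + 2 * MG * ε'))
            = (∫ τ in Set.Ioc t (t + h), ‖G τ (u n) - G t (u n)‖) + h * (2 * MG * ε') := by
          rw [integral_add hgInt (integrableOn_const measure_Ioc_lt_top.ne)]
          congr 1
          rw [setIntegral_const, measureReal_def, Real.volume_Ioc, smul_eq_mul]
          rw [ENNReal.toReal_ofReal (by linarith)]
          ring_nf
        rw [intervalIntegral.integral_of_le (by linarith : t ≤ t + h),
          intervalIntegral.integral_of_le (by linarith : t ≤ t + h)]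
        rw [hsplit] at hmono
        exact hmono
      · rw [intervalIntegral.integral_undef hi]
        have hB0 : 0 ≤ ∫ τ in t..t + h, ‖G τ (u n) - G t (u n)‖ :=
          intervalIntegral.integral_nonneg (by linarith) fun τ _ => norm_nonneg _
        have : 0 ≤ h * (2 * MG * ε') := by positivity
        linarith
    have hval : h⁻¹ * (∫ τ in t..t + h, ‖G τ x - G t x‖)
        ≤ h⁻¹ * (∫ τ in t..t + h, ‖G τ (u n) - G t (u n)‖) + 2 * MG * ε' := by
      have hmul := mul_le_mul_of_nonneg_left hkey (inv_nonneg.2 hpos.le)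
      rw [mul_add] at hmul
      have heq : h⁻¹ * (h * (2 * MG * ε')) = 2 * MG * ε' := by
        field_simp
      rw [heq] at hmul
      exact hmul
    have hMGε : 2 * MG * ε' ≤ ε / 2 := by
      rw [hε'def, ← mul_div_assoc, div_le_div_iff₀ (by positivity) (by norm_num)]
      nlinarith [hε.le]
    have habs : ‖h⁻¹ * ∫ τ in t..t + h, ‖G τ x - G t x‖‖
        = h⁻¹ * ∫ τ in t..t + h, ‖G τ x - G t x‖ := by
      rw [Real.norm_eq_abs, abs_of_nonneg (by positivity)]
    rw [habs]
    calc h⁻¹ * ∫ τ in t..t + h, ‖G τ x - G t x‖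
        ≤ h⁻¹ * (∫ τ in t..t + h, ‖G τ (u n) - G t (u n)‖) + 2 * MG * ε' := hval
      _ < ε / 2 + ε / 2 := by linarith [hMGε, hh1]
      _ = ε := by ring
  refine ⟨Jset, fun t ht => ht.1, hJnull, hJgood, ?_⟩
  intro xtraj _ hmem
  have hae : ∀ᵐ t ∂(volume.restrict (Set.Icc (0:ℝ) T)), t ∈ Jset := by
    rw [ae_iff, Measure.restrict_apply' measurableSet_Icc]
    refine measure_mono_null ?_ hJnull
    intro s hs
    exact ⟨hs.2, hs.1⟩
  filter_upwards [hae] with t ht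
  exact hJgood t ht (xtraj t) (hmem t ⟨ht.1.1, ht.1.2.le⟩)
end
end
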